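/- arXiv:1505.03063 — 2 statements merged into one kernel-verified Lean document; each statement's English description precedes it below -/
import Mathlib

section
/- Under the standing assumptions on the 3-block Bregman ADMM, if the sequence {(x^k, y^k, z^k)} is bounded, then the dual sequence {p^k} is bounded, the series ∑_{k≥1} ‖w^{k+1} − w^k‖² converges (is finite), and in particular ‖w^{k+1} − w^k‖ → 0 as k → ∞. -/
open RealInnerProductSpace Filter

noncomputable section

/-- Euclidean space `ℝ^n`. -/
abbrev Eu (n : ℕ) := EuclideanSpace ℝ (Fin n)

/-- The Bregman distance `Δ_φ(u,v) = φ(u) − φ(v) − ⟨∇φ(v), u−v⟩` associated with a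
differentiable function `φ` whose gradient is `φ'`. -/
def Breg {n : ℕ} (φ : Eu n → ℝ) (φ' : Eu n → Eu n) (u v : Eu n) : ℝ :=
  φ u - φ v - ⟪φ' v, u - v⟫

/-- `F` is `μ`-strongly convex iff `F − (μ/2)‖·‖²` is convex. -/
def StrongConvex {n : ℕ} (μ : ℝ) (F : Eu n → ℝ) : Prop :=
  ConvexOn ℝ Set.univ (fun u => F u - μ / 2 * ‖u‖ ^ 2)

/-- The augmented Lagrangian
`L_α(x,y,z,p) = f(x)+g(y)+h(z)+⟨p, Ax+By+Cz⟩+(α/2)‖Ax+By+Cz‖²`. -/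
def Lag {n₁ n₂ n₃ m : ℕ} (f : Eu n₁ → ℝ) (g : Eu n₂ → ℝ) (h : Eu n₃ → ℝ)
    (A : Eu n₁ →L[ℝ] Eu m) (B : Eu n₂ →L[ℝ] Eu m) (C : Eu n₃ →L[ℝ] Eu m)
    (α : ℝ) (x : Eu n₁) (y : Eu n₂) (z : Eu n₃) (p : Eu m) : ℝ :=
  f x + g y + h z + ⟪p, A x + B y + C z⟫ + α / 2 * ‖A x + B y + C z‖ ^ 2

/-- All the data and standing assumptions of the 3-block Bregman ADMM:
objective functions `f, g, h`, Bregman kernels `φ₁, φ₂, φ₃` (with gradients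
`φ₁', φ₂', φ₃'`, and `h'` the gradient of `h`), matrices `A, B, C` (as linear maps),
parameters, iterate sequences `x, y, z, p`, and the standing hypotheses
(lower semicontinuity of `f, g`; differentiability with Lipschitz gradients;
convexity of kernels; the strong-convexity alternatives; quantitative full row rank
of `C`; the lower bound on `α`; and the BADMM update rules, where each of the three
primal updates is a global minimizer of the corresponding subproblem). -/
structure BADMM (n₁ n₂ n₃ m : ℕ) where
  f : Eu n₁ → ℝ
  g : Eu n₂ → ℝ
  h : Eu n₃ → ℝ
  φ₁ : Eu n₁ → ℝ
  φ₂ : Eu n₂ → ℝ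
  φ₃ : Eu n₃ → ℝ
  h' : Eu n₃ → Eu n₃
  φ₁' : Eu n₁ → Eu n₁
  φ₂' : Eu n₂ → Eu n₂
  φ₃' : Eu n₃ → Eu n₃
  A : Eu n₁ →L[ℝ] Eu m
  B : Eu n₂ →L[ℝ] Eu m
  C : Eu n₃ →L[ℝ] Eu m
  α : ℝ
  ℓh : ℝ
  ℓ₁ : ℝ
  ℓ₂ : ℝ
  ℓ₃ : ℝ
  μ₁ : ℝ
  μ₂ : ℝ
  μ₃ : ℝ
  σC : ℝ
  x : ℕ → Eu n₁
  y : ℕ → Eu n₂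
  z : ℕ → Eu n₃
  p : ℕ → Eu m
  hα_pos : 0 < α
  hf_lsc : LowerSemicontinuous f
  hg_lsc : LowerSemicontinuous g
  hgrad_h : ∀ v, HasGradientAt h (h' v) v
  hgrad_φ₁ : ∀ v, HasGradientAt φ₁ (φ₁' v) v
  hgrad_φ₂ : ∀ v, HasGradientAt φ₂ (φ₂' v) v
  hgrad_φ₃ : ∀ v, HasGradientAt φ₃ (φ₃' v) v
  hℓh_nonneg : 0 ≤ ℓh
  hℓ₁_nonneg : 0 ≤ ℓ₁
  hℓ₂_nonneg : 0 ≤ ℓ₂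
  hℓ₃_nonneg : 0 ≤ ℓ₃
  hlip_h : ∀ a b, ‖h' a - h' b‖ ≤ ℓh * ‖a - b‖
  hlip_φ₁ : ∀ a b, ‖φ₁' a - φ₁' b‖ ≤ ℓ₁ * ‖a - b‖
  hlip_φ₂ : ∀ a b, ‖φ₂' a - φ₂' b‖ ≤ ℓ₂ * ‖a - b‖
  hlip_φ₃ : ∀ a b, ‖φ₃' a - φ₃' b‖ ≤ ℓ₃ * ‖a - b‖
  hφ₁_convex : ConvexOn ℝ Set.univ φ₁
  hφ₂_convex : ConvexOn ℝ Set.univ φ₂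
  hφ₃_convex : ConvexOn ℝ Set.univ φ₃
  hμ₁_pos : 0 < μ₁
  hμ₂_pos : 0 < μ₂
  hμ₃_pos : 0 < μ₃
  hsc₁ : StrongConvex μ₁ f ∨ StrongConvex μ₁ φ₁
  hsc₂ : StrongConvex μ₂ g ∨ StrongConvex μ₂ φ₂
  hsc₃ : StrongConvex μ₃ h ∨ StrongConvex μ₃ φ₃
  hσC_pos : 0 < σC
  hC_rank : ∀ u : Eu m, σC * ‖u‖ ^ 2 ≤ ‖(ContinuousLinearMap.adjoint C) u‖ ^ 2
  hα_large : 4 * ((ℓh + ℓ₃) ^ 2 + ℓ₃ ^ 2) / (μ₃ * σC) < α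
  hx_min : ∀ k, ∀ ξ : Eu n₁,
    Lag f g h A B C α (x (k+1)) (y k) (z k) (p k) + Breg φ₁ φ₁' (x (k+1)) (x k) ≤
      Lag f g h A B C α ξ (y k) (z k) (p k) + Breg φ₁ φ₁' ξ (x k)
  hy_min : ∀ k, ∀ ξ : Eu n₂,
    Lag f g h A B C α (x (k+1)) (y (k+1)) (z k) (p k) + Breg φ₂ φ₂' (y (k+1)) (y k) ≤
      Lag f g h A B C α (x (k+1)) ξ (z k) (p k) + Breg φ₂ φ₂' ξ (y k)
  hz_min : ∀ k, ∀ ξ : Eu n₃,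
    Lag f g h A B C α (x (k+1)) (y (k+1)) (z (k+1)) (p k) + Breg φ₃ φ₃' (z (k+1)) (z k) ≤
      Lag f g h A B C α (x (k+1)) (y (k+1)) ξ (p k) + Breg φ₃ φ₃' ξ (z k)
  hp_upd : ∀ k, p (k+1) = p k + α • (A (x (k+1)) + B (y (k+1)) + C (z (k+1)))

namespace BADMM

variable {n₁ n₂ n₃ m : ℕ} (P : BADMM n₁ n₂ n₃ m)

/-- `σ₀ = 2ℓ₃²/(ασ_C)`. -/
def σ0 : ℝ := 2 * P.ℓ₃ ^ 2 / (P.α * P.σC)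

/-- `σ₁ = (1/2)·min(μ₁, μ₂, μ₃ − 4(ℓ_h+ℓ₃)²/(ασ_C) − 4ℓ₃²/(ασ_C))`. -/
def σ1 : ℝ :=
  (1 / 2) * min P.μ₁ (min P.μ₂
    (P.μ₃ - 4 * (P.ℓh + P.ℓ₃) ^ 2 / (P.α * P.σC) - 4 * P.ℓ₃ ^ 2 / (P.α * P.σC)))

/-- The augmented Lagrangian of the problem, `L_α`. -/
def L (x : Eu n₁) (y : Eu n₂) (z : Eu n₃) (p : Eu m) : ℝ :=
  Lag P.f P.g P.h P.A P.B P.C P.α x y z p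

/-- `L̂(x,y,z,p,ẑ) = L_α(x,y,z,p) + σ₀‖z−ẑ‖²`. -/
def Lhat (x : Eu n₁) (y : Eu n₂) (z : Eu n₃) (p : Eu m) (zh : Eu n₃) : ℝ :=
  P.L x y z p + P.σ0 * ‖z - zh‖ ^ 2

/-- `‖w^{k+1}−w^k‖²`. -/
def dw2 (k : ℕ) : ℝ :=
  ‖P.x (k+1) - P.x k‖ ^ 2 + ‖P.y (k+1) - P.y k‖ ^ 2 +
    ‖P.z (k+1) - P.z k‖ ^ 2 + ‖P.p (k+1) - P.p k‖ ^ 2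

end BADMM

lemma grad_ineq {n : ℕ} {μ : ℝ} {φ : Eu n → ℝ} {g v : Eu n}
    (hφ : StrongConvexOn Set.univ μ φ) (hg : HasGradientAt φ g v) (u : Eu n) :
    φ v + ⟪g, u - v⟫ + μ / 2 * ‖u - v‖ ^ 2 ≤ φ u := by
  set ψ : ℝ → ℝ := fun t => φ (v + t • (u - v)) with hψdef
  have hline : HasDerivAt (fun t : ℝ => v + t • (u - v)) (u - v) 0 := by
    simpa using ((hasDerivAt_id (0:ℝ)).smul_const (u - v)).const_add v
  have hgrad' : HasFDerivAt φ ((InnerProductSpace.toDual ℝ (Eu n)) g) (v + (0:ℝ) • (u - v)) := by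
    simpa using hg.hasFDerivAt
  have hψ : HasDerivAt ψ (⟪g, u - v⟫) 0 := by
    have h := hgrad'.comp_hasDerivAt (0:ℝ) hline
    simp [InnerProductSpace.toDual_apply_apply] at h
    exact h
  have hslope : Tendsto (slope ψ 0) (nhdsWithin 0 (Set.Ioi 0)) (nhds (⟪g, u - v⟫)) :=
    (hasDerivAt_iff_tendsto_slope.mp hψ).mono_left
      (nhdsWithin_mono _ (fun t ht => ne_of_gt ht))
  have hbound : ∀ᶠ t : ℝ in nhdsWithin 0 (Set.Ioi 0),
      slope ψ 0 t ≤ φ u - φ v - (1 - t) * (μ / 2 * ‖u - v‖ ^ 2) := by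
    filter_upwards [self_mem_nhdsWithin,
      eventually_nhdsWithin_of_eventually_nhds (eventually_lt_nhds one_pos)] with t ht ht1
    have ht0 : (0:ℝ) < t := ht
    have hcomb := hφ.2 (Set.mem_univ u) (Set.mem_univ v) ht0.le (by linarith : (0:ℝ) ≤ 1 - t)
      (by ring)
    have hpt : v + t • (u - v) = t • u + (1 - t) • v := by
      simp [smul_sub, sub_smul]; abel
    have hψt : ψ t ≤ t * φ u + (1 - t) * φ v - t * (1 - t) * (μ / 2 * ‖u - v‖ ^ 2) := by
      rw [hψdef]; simp only [hpt]
      simpa [smul_eq_mul] using hcomb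
    have hψ0 : ψ 0 = φ v := by simp [hψdef]
    rw [slope_def_field, hψ0, sub_zero, div_le_iff₀ ht0]
    nlinarith [hψt]
  have hlim2 : Tendsto (fun t : ℝ => φ u - φ v - (1 - t) * (μ / 2 * ‖u - v‖ ^ 2))
      (nhdsWithin 0 (Set.Ioi 0)) (nhds (φ u - φ v - μ / 2 * ‖u - v‖ ^ 2)) := by
    have : Continuous (fun t : ℝ => φ u - φ v - (1 - t) * (μ / 2 * ‖u - v‖ ^ 2)) := by
      continuity
    have h0 := this.tendsto 0
    simp only [sub_zero, one_mul] at h0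
    simpa using h0.mono_left nhdsWithin_le_nhds
  have := le_of_tendsto_of_tendsto hslope hlim2 hbound
  linarith

/-- minimizers of strongly convex functions. -/
lemma strong_min {n : ℕ} {μ : ℝ} {F : Eu n → ℝ}
    (hF : StrongConvexOn Set.univ μ F) {a : Eu n} (hmin : ∀ ξ, F a ≤ F ξ) (ξ : Eu n) :
    F a + μ / 2 * ‖ξ - a‖ ^ 2 ≤ F ξ := by
  have hbound : ∀ᶠ t : ℝ in nhdsWithin 0 (Set.Ioi 0),
      F a + (1 - t) * (μ / 2 * ‖ξ - a‖ ^ 2) ≤ F ξ := by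
    filter_upwards [self_mem_nhdsWithin,
      eventually_nhdsWithin_of_eventually_nhds (eventually_lt_nhds one_pos)] with t ht ht1
    have ht0 : (0:ℝ) < t := ht
    have hcomb := hF.2 (Set.mem_univ ξ) (Set.mem_univ a) ht0.le
      (by linarith : (0:ℝ) ≤ 1 - t) (by ring)
    have h2 : F a ≤ F (t • ξ + (1 - t) • a) := hmin _
    simp only [smul_eq_mul] at hcomb
    nlinarith [hcomb, h2]
  have hlim : Tendsto (fun t : ℝ => F a + (1 - t) * (μ / 2 * ‖ξ - a‖ ^ 2))
      (nhdsWithin 0 (Set.Ioi 0)) (nhds (F a + μ / 2 * ‖ξ - a‖ ^ 2)) := by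
    have hc : Continuous (fun t : ℝ => F a + (1 - t) * (μ / 2 * ‖ξ - a‖ ^ 2)) := by continuity
    have h0 := hc.tendsto 0
    simp only [sub_zero, one_mul] at h0
    exact h0.mono_left nhdsWithin_le_nhds
  exact le_of_tendsto hlim hbound

/-- lower semicontinuous functions are bounded below on closed balls. -/
lemma lsc_bdd {n : ℕ} {f : Eu n → ℝ} (hf : LowerSemicontinuous f) (M : ℝ) :
    ∃ c : ℝ, ∀ u : Eu n, ‖u‖ ≤ M → c ≤ f u := by
  have hK : IsCompact (Metric.closedBall (0 : Eu n) M) := isCompact_closedBall _ _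
  obtain ⟨t, ht⟩ := hK.elim_nhds_subcover (fun x => {x' | f x - 1 < f x'})
    (fun x _ => (hf x (f x - 1) (by linarith)).mono (fun x' h => h))
  by_cases hne : t.Nonempty
  · refine ⟨t.inf' hne (fun x => f x - 1), fun u hu => ?_⟩
    have : u ∈ Metric.closedBall (0 : Eu n) M := by
      simpa [Metric.mem_closedBall, dist_zero_right] using hu
    obtain ⟨x, hx, hfx⟩ := Set.mem_iUnion₂.mp (ht.2 this)
    exact le_trans (Finset.inf'_le _ hx) (le_of_lt hfx)
  · refine ⟨0, fun u hu => ?_⟩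
    have : u ∈ Metric.closedBall (0 : Eu n) M := by
      simpa [Metric.mem_closedBall, dist_zero_right] using hu
    obtain ⟨x, hx, -⟩ := Set.mem_iUnion₂.mp (ht.2 this)
    exact absurd ⟨x, hx⟩ hne

/-- a convex function is strongly convex with modulus 0. -/
lemma conv_strong0 {n : ℕ} {F : Eu n → ℝ} (h : ConvexOn ℝ Set.univ F) :
    StrongConvexOn Set.univ 0 F := by
  have := h.uniformConvexOn_zero
  refine this.mono (fun r => ?_)
  simp

/-- strongly convex + convex is strongly convex. -/
lemma strong_add_conv {n : ℕ} {μ : ℝ} {F G : Eu n → ℝ}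
    (hF : StrongConvexOn Set.univ μ F) (hG : ConvexOn ℝ Set.univ G) :
    StrongConvexOn Set.univ μ (fun x => F x + G x) := by
  have := hF.add hG.uniformConvexOn_zero
  refine UniformConvexOn.mono (fun r => ?_) this
  simp

lemma convexOn_normSq {n : ℕ} : ConvexOn ℝ Set.univ (fun u : Eu n => ‖u‖ ^ 2) := by
  have h2 : StrongConvexOn Set.univ 2 (fun u : Eu n => ‖u‖ ^ 2) := by
    rw [strongConvexOn_iff_convex]
    have : (fun u : Eu n => ‖u‖ ^ 2 - 2 / 2 * ‖u‖ ^ 2) = fun _ => (0:ℝ) := by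
      funext u; ring
    rw [this]
    exact convexOn_const _ convex_univ
  have := h2.mono (by norm_num : (0:ℝ) ≤ 2)
  rwa [strongConvexOn_zero] at this

lemma convexOn_quad {n m : ℕ} (A : Eu n →L[ℝ] Eu m) (c : Eu m) :
    ConvexOn ℝ Set.univ (fun ξ : Eu n => ‖A ξ + c‖ ^ 2) := by
  let aff : Eu n →ᵃ[ℝ] Eu m := AffineMap.mk' (fun ξ => A ξ + c) A.toLinearMap 0
    (fun p => by simp)
  have := (convexOn_normSq (n := m)).comp_affineMap aff
  simp [aff, Set.preimage_univ] at this
  exact this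

lemma convexOn_linear {n : ℕ} (a : Eu n) : ConvexOn ℝ Set.univ (fun ξ : Eu n => (⟪a, ξ⟫ : ℝ)) := by
  refine ⟨convex_univ, fun x _ y _ p q hp hq hpq => le_of_eq ?_⟩
  simp only [inner_add_right, real_inner_smul_right, smul_eq_mul]

/-- generic descent for one BADMM block update. -/
lemma step_descent {n m' : ℕ} {μ α : ℝ} (hα : 0 ≤ α)
    {F φ : Eu n → ℝ} {φ' : Eu n → Eu n}
    (hφconv : ConvexOn ℝ Set.univ φ) (hφgrad : ∀ v, HasGradientAt φ (φ' v) v)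
    (hsc : StrongConvexOn Set.univ μ F ∨ StrongConvexOn Set.univ μ φ)
    (T : Eu n →L[ℝ] Eu m') (c pp : Eu m') (Kc : ℝ) {a b : Eu n}
    (hmin : ∀ ξ, F a + ⟪pp, T a + c⟫ + α/2*‖T a + c‖^2 + (φ a - φ b - ⟪φ' b, a - b⟫) + Kc
              ≤ F ξ + ⟪pp, T ξ + c⟫ + α/2*‖T ξ + c‖^2 + (φ ξ - φ b - ⟪φ' b, ξ - b⟫) + Kc) :
    F a + ⟪pp, T a + c⟫ + α/2*‖T a + c‖^2 + μ/2*‖a - b‖^2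
      ≤ F b + ⟪pp, T b + c⟫ + α/2*‖T b + c‖^2 := by
  have hbreg0 : φ b + ⟪φ' b, a - b⟫ + 0/2*‖a - b‖^2 ≤ φ a :=
    grad_ineq (conv_strong0 hφconv) (hφgrad b) a
  rcases hsc with hF | hφs
  · -- F strongly convex: the whole subproblem objective is strongly convex
    set G : Eu n → ℝ := fun ξ =>
      ⟪pp, T ξ + c⟫ + α/2*‖T ξ + c‖^2 + (φ ξ - φ b - ⟪φ' b, ξ - b⟫) + Kc with hGdef
    have hGeq : G = fun ξ => ((⟪(ContinuousLinearMap.adjoint T) pp - φ' b, ξ⟫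
        + α/2 * ‖T ξ + c‖^2) + φ ξ)
        + (⟪pp, c⟫ - φ b + ⟪φ' b, b⟫ + Kc) := by
      funext ξ
      simp only [hGdef]
      rw [inner_add_right pp (T ξ) c, ← ContinuousLinearMap.adjoint_inner_left T ξ pp,
        inner_sub_left, inner_sub_right]
      ring
    have hGconv : ConvexOn ℝ Set.univ G := by
      rw [hGeq]
      refine ConvexOn.add ?_ (convexOn_const _ convex_univ)
      refine ConvexOn.add (ConvexOn.add (convexOn_linear _) ?_) hφconv
      have := (convexOn_quad T c).smul (c := α/2) (by linarith)
      simpa [smul_eq_mul] using this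
    have hFG : StrongConvexOn Set.univ μ (fun ξ => F ξ + G ξ) := strong_add_conv hF hGconv
    have hmin' : ∀ ξ, F a + G a ≤ F ξ + G ξ := by
      intro ξ
      have := hmin ξ
      simp only [hGdef]
      linarith
    have := strong_min hFG hmin' b
    have hGb : G b = ⟪pp, T b + c⟫ + α/2*‖T b + c‖^2 + Kc := by
      simp only [hGdef]; simp
    have hGa : ⟪pp, T a + c⟫ + α/2*‖T a + c‖^2 + Kc ≤ G a := by
      simp only [hGdef]; nlinarith [hbreg0]
    rw [norm_sub_rev] at this
    linarith
  · -- φ strongly convex: use the Bregman distance lower bound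
    have h1 := hmin b
    have hb : φ b - φ b - ⟪φ' b, b - b⟫ = 0 := by simp
    have hbreg : φ b + ⟪φ' b, a - b⟫ + μ/2*‖a - b‖^2 ≤ φ a :=
      grad_ineq hφs (hφgrad b) a
    rw [hb] at h1
    linarith
namespace BADMM
variable {n₁ n₂ n₃ m : ℕ} (P : BADMM n₁ n₂ n₃ m)

/-- Key identity: first-order optimality of the z-update combined with the dual update. -/
lemma key_identity (k : ℕ) :
    P.h' (P.z (k+1)) + P.φ₃' (P.z (k+1)) - P.φ₃' (P.z k)
      + (ContinuousLinearMap.adjoint P.C) (P.p (k+1)) = 0 := by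
  set x := P.x (k+1) with hxdef
  set y := P.y (k+1) with hydef
  set zk := P.z k with hzkdef
  set ζ := P.z (k+1) with hζdef
  set pk := P.p k with hpkdef
  set w : Eu m := P.A x + P.B y with hwdef
  set q : Eu n₃ := (ContinuousLinearMap.adjoint P.C) pk - P.φ₃' zk with hqdef
  set K : ℝ := P.f x + P.g y + ⟪pk, w⟫ - P.φ₃ zk + ⟪P.φ₃' zk, zk⟫ with hKdef
  have hfun : ∀ ξ : Eu n₃, Lag P.f P.g P.h P.A P.B P.C P.α x y ξ pk + Breg P.φ₃ P.φ₃' ξ zk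
      = P.h ξ + P.φ₃ ξ + ⟪q, ξ⟫ + P.α / 2 * ⟪w + P.C ξ, w + P.C ξ⟫ + K := by
    intro ξ
    simp only [Lag, Breg, hqdef, hKdef]
    rw [show P.A x + P.B y + P.C ξ = w + P.C ξ from rfl]
    rw [inner_add_right pk w (P.C ξ), ← ContinuousLinearMap.adjoint_inner_left P.C ξ pk,
      inner_sub_left, inner_sub_right, ← real_inner_self_eq_norm_sq (w + P.C ξ)]
    ring
  -- derivative of the canonical form at ζ
  have hh := (P.hgrad_h ζ).hasFDerivAt
  have hφ := (P.hgrad_φ₃ ζ).hasFDerivAt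
  have hq : HasFDerivAt (fun ξ : Eu n₃ => (⟪q, ξ⟫ : ℝ)) (innerSL ℝ q) ζ :=
    (innerSL ℝ q).hasFDerivAt
  have haff : HasFDerivAt (fun ξ : Eu n₃ => w + P.C ξ) (P.C : Eu n₃ →L[ℝ] Eu m) ζ :=
    P.C.hasFDerivAt.const_add w
  have hquad := haff.inner ℝ haff
  have htotal := (((hh.add hφ).add hq).add (hquad.const_mul (P.α / 2))).add_const K
  have hmin : IsLocalMin (fun ξ : Eu n₃ =>
      P.h ξ + P.φ₃ ξ + ⟪q, ξ⟫ + P.α / 2 * ⟪w + P.C ξ, w + P.C ξ⟫ + K) ζ := by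
    refine Filter.Eventually.of_forall (fun ξ => ?_)
    have := P.hz_min k ξ
    rw [hfun ξ, hfun ζ] at this
    exact this
  have hD0 := hmin.hasFDerivAt_eq_zero htotal
  -- evaluate the zero derivative at an arbitrary direction
  have hdir : ∀ dir : Eu n₃,
      (⟪P.h' ζ + P.φ₃' ζ + q + P.α • (ContinuousLinearMap.adjoint P.C) (w + P.C ζ), dir⟫ : ℝ)
        = 0 := by
    intro dir
    have h1 := congrFun (congrArg DFunLike.coe hD0) dir
    simp only [ContinuousLinearMap.add_apply, ContinuousLinearMap.coe_smul',
      ContinuousLinearMap.comp_apply, ContinuousLinearMap.prod_apply, fderivInnerCLM_apply,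
      ContinuousLinearMap.zero_apply, ContinuousLinearMap.smul_apply,
      InnerProductSpace.toDual_apply_apply, innerSL_apply_apply, smul_eq_mul] at h1
    rw [inner_add_left, inner_add_left, inner_add_left, real_inner_smul_left,
      ContinuousLinearMap.adjoint_inner_left]
    rw [real_inner_comm (P.C dir) (w + P.C ζ), real_inner_comm (w + P.C ζ) (P.C dir)] at h1
    linarith
  have hG : P.h' ζ + P.φ₃' ζ + q + P.α • (ContinuousLinearMap.adjoint P.C) (w + P.C ζ) = 0 := by
    have := hdir (P.h' ζ + P.φ₃' ζ + q + P.α • (ContinuousLinearMap.adjoint P.C) (w + P.C ζ))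
    exact inner_self_eq_zero.mp this
  -- rewrite using the dual update
  have hp : P.p (k+1) = pk + P.α • (w + P.C ζ) := by
    rw [P.hp_upd k]
  rw [hp, map_add, map_smul]
  rw [hqdef] at hG
  have : P.h' ζ + P.φ₃' ζ - P.φ₃' zk +
      ((ContinuousLinearMap.adjoint P.C) pk + P.α • (ContinuousLinearMap.adjoint P.C) (w + P.C ζ))
      = P.h' ζ + P.φ₃' ζ + ((ContinuousLinearMap.adjoint P.C) pk - P.φ₃' zk)
        + P.α • (ContinuousLinearMap.adjoint P.C) (w + P.C ζ) := by abel
  rw [this]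
  exact hG

lemma descent_x (k : ℕ) :
    P.L (P.x (k+1)) (P.y k) (P.z k) (P.p k) + P.μ₁/2 * ‖P.x (k+1) - P.x k‖^2
      ≤ P.L (P.x k) (P.y k) (P.z k) (P.p k) := by
  have hsc : StrongConvexOn Set.univ P.μ₁ P.f ∨ StrongConvexOn Set.univ P.μ₁ P.φ₁ := by
    rcases P.hsc₁ with h | h
    exacts [Or.inl (strongConvexOn_iff_convex.mpr h), Or.inr (strongConvexOn_iff_convex.mpr h)]
  set c : Eu m := P.B (P.y k) + P.C (P.z k) with hcdef
  have heq : ∀ ξ : Eu n₁, P.L ξ (P.y k) (P.z k) (P.p k)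
      = P.f ξ + ⟪P.p k, P.A ξ + c⟫ + P.α/2*‖P.A ξ + c‖^2 + (P.g (P.y k) + P.h (P.z k)) := by
    intro ξ
    simp only [L, Lag, hcdef]
    rw [add_assoc (P.A ξ)]
    ring
  have hmin : ∀ ξ : Eu n₁,
      P.f (P.x (k+1)) + ⟪P.p k, P.A (P.x (k+1)) + c⟫ + P.α/2*‖P.A (P.x (k+1)) + c‖^2
        + (P.φ₁ (P.x (k+1)) - P.φ₁ (P.x k) - ⟪P.φ₁' (P.x k), P.x (k+1) - P.x k⟫)
        + (P.g (P.y k) + P.h (P.z k))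
      ≤ P.f ξ + ⟪P.p k, P.A ξ + c⟫ + P.α/2*‖P.A ξ + c‖^2
        + (P.φ₁ ξ - P.φ₁ (P.x k) - ⟪P.φ₁' (P.x k), ξ - P.x k⟫)
        + (P.g (P.y k) + P.h (P.z k)) := by
    intro ξ
    have h1 := P.hx_min k ξ
    simp only [Breg] at h1
    have e1 := heq (P.x (k+1))
    have e2 := heq ξ
    simp only [L] at e1 e2
    linarith
  have := step_descent (le_of_lt P.hα_pos) P.hφ₁_convex P.hgrad_φ₁ hsc P.A c (P.p k)
    (P.g (P.y k) + P.h (P.z k)) hmin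
  have e1 := heq (P.x (k+1))
  have e2 := heq (P.x k)
  linarith

lemma descent_y (k : ℕ) :
    P.L (P.x (k+1)) (P.y (k+1)) (P.z k) (P.p k) + P.μ₂/2 * ‖P.y (k+1) - P.y k‖^2
      ≤ P.L (P.x (k+1)) (P.y k) (P.z k) (P.p k) := by
  have hsc : StrongConvexOn Set.univ P.μ₂ P.g ∨ StrongConvexOn Set.univ P.μ₂ P.φ₂ := by
    rcases P.hsc₂ with h | h
    exacts [Or.inl (strongConvexOn_iff_convex.mpr h), Or.inr (strongConvexOn_iff_convex.mpr h)]
  set c : Eu m := P.A (P.x (k+1)) + P.C (P.z k) with hcdef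
  have heq : ∀ ξ : Eu n₂, P.L (P.x (k+1)) ξ (P.z k) (P.p k)
      = P.g ξ + ⟪P.p k, P.B ξ + c⟫ + P.α/2*‖P.B ξ + c‖^2 + (P.f (P.x (k+1)) + P.h (P.z k)) := by
    intro ξ
    simp only [L, Lag, hcdef]
    rw [show P.A (P.x (k+1)) + P.B ξ + P.C (P.z k)
      = P.B ξ + (P.A (P.x (k+1)) + P.C (P.z k)) from by abel]
    ring
  have hmin : ∀ ξ : Eu n₂,
      P.g (P.y (k+1)) + ⟪P.p k, P.B (P.y (k+1)) + c⟫ + P.α/2*‖P.B (P.y (k+1)) + c‖^2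
        + (P.φ₂ (P.y (k+1)) - P.φ₂ (P.y k) - ⟪P.φ₂' (P.y k), P.y (k+1) - P.y k⟫)
        + (P.f (P.x (k+1)) + P.h (P.z k))
      ≤ P.g ξ + ⟪P.p k, P.B ξ + c⟫ + P.α/2*‖P.B ξ + c‖^2
        + (P.φ₂ ξ - P.φ₂ (P.y k) - ⟪P.φ₂' (P.y k), ξ - P.y k⟫)
        + (P.f (P.x (k+1)) + P.h (P.z k)) := by
    intro ξ
    have h1 := P.hy_min k ξ
    simp only [Breg] at h1
    have e1 := heq (P.y (k+1))
    have e2 := heq ξ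
    simp only [L] at e1 e2
    linarith
  have := step_descent (le_of_lt P.hα_pos) P.hφ₂_convex P.hgrad_φ₂ hsc P.B c (P.p k)
    (P.f (P.x (k+1)) + P.h (P.z k)) hmin
  have e1 := heq (P.y (k+1))
  have e2 := heq (P.y k)
  linarith

lemma descent_z (k : ℕ) :
    P.L (P.x (k+1)) (P.y (k+1)) (P.z (k+1)) (P.p k) + P.μ₃/2 * ‖P.z (k+1) - P.z k‖^2
      ≤ P.L (P.x (k+1)) (P.y (k+1)) (P.z k) (P.p k) := by
  have hsc : StrongConvexOn Set.univ P.μ₃ P.h ∨ StrongConvexOn Set.univ P.μ₃ P.φ₃ := by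
    rcases P.hsc₃ with h | h
    exacts [Or.inl (strongConvexOn_iff_convex.mpr h), Or.inr (strongConvexOn_iff_convex.mpr h)]
  set c : Eu m := P.A (P.x (k+1)) + P.B (P.y (k+1)) with hcdef
  have heq : ∀ ξ : Eu n₃, P.L (P.x (k+1)) (P.y (k+1)) ξ (P.p k)
      = P.h ξ + ⟪P.p k, P.C ξ + c⟫ + P.α/2*‖P.C ξ + c‖^2
        + (P.f (P.x (k+1)) + P.g (P.y (k+1))) := by
    intro ξ
    simp only [L, Lag, hcdef]
    rw [show P.A (P.x (k+1)) + P.B (P.y (k+1)) + P.C ξ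
      = P.C ξ + (P.A (P.x (k+1)) + P.B (P.y (k+1))) from by abel]
    ring
  have hmin : ∀ ξ : Eu n₃,
      P.h (P.z (k+1)) + ⟪P.p k, P.C (P.z (k+1)) + c⟫ + P.α/2*‖P.C (P.z (k+1)) + c‖^2
        + (P.φ₃ (P.z (k+1)) - P.φ₃ (P.z k) - ⟪P.φ₃' (P.z k), P.z (k+1) - P.z k⟫)
        + (P.f (P.x (k+1)) + P.g (P.y (k+1)))
      ≤ P.h ξ + ⟪P.p k, P.C ξ + c⟫ + P.α/2*‖P.C ξ + c‖^2
        + (P.φ₃ ξ - P.φ₃ (P.z k) - ⟪P.φ₃' (P.z k), ξ - P.z k⟫)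
        + (P.f (P.x (k+1)) + P.g (P.y (k+1))) := by
    intro ξ
    have h1 := P.hz_min k ξ
    simp only [Breg] at h1
    have e1 := heq (P.z (k+1))
    have e2 := heq ξ
    simp only [L] at e1 e2
    linarith
  have := step_descent (le_of_lt P.hα_pos) P.hφ₃_convex P.hgrad_φ₃ hsc P.C c (P.p k)
    (P.f (P.x (k+1)) + P.g (P.y (k+1))) hmin
  have e1 := heq (P.z (k+1))
  have e2 := heq (P.z k)
  linarith

lemma descent_p (k : ℕ) :
    P.L (P.x (k+1)) (P.y (k+1)) (P.z (k+1)) (P.p (k+1))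
      = P.L (P.x (k+1)) (P.y (k+1)) (P.z (k+1)) (P.p k)
        + P.α * ‖P.A (P.x (k+1)) + P.B (P.y (k+1)) + P.C (P.z (k+1))‖^2 := by
  simp only [L, Lag]
  rw [P.hp_upd k, inner_add_left, real_inner_smul_left, real_inner_self_eq_norm_sq]
  ring

lemma dp_norm (k : ℕ) :
    ‖P.p (k+1) - P.p k‖^2
      = P.α^2 * ‖P.A (P.x (k+1)) + P.B (P.y (k+1)) + P.C (P.z (k+1))‖^2 := by
  have : P.p (k+1) - P.p k = P.α • (P.A (P.x (k+1)) + P.B (P.y (k+1)) + P.C (P.z (k+1))) := by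
    rw [P.hp_upd k]; abel
  rw [this, norm_smul]
  rw [Real.norm_eq_abs, mul_pow, sq_abs]

lemma descent_total (k : ℕ) :
    P.L (P.x (k+1)) (P.y (k+1)) (P.z (k+1)) (P.p (k+1))
      + P.μ₁/2 * ‖P.x (k+1) - P.x k‖^2 + P.μ₂/2 * ‖P.y (k+1) - P.y k‖^2
      + P.μ₃/2 * ‖P.z (k+1) - P.z k‖^2
    ≤ P.L (P.x k) (P.y k) (P.z k) (P.p k)
      + P.α * ‖P.A (P.x (k+1)) + P.B (P.y (k+1)) + P.C (P.z (k+1))‖^2 := by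
  have h1 := P.descent_x k
  have h2 := P.descent_y k
  have h3 := P.descent_z k
  have h4 := P.descent_p k
  linarith

lemma dp_bound (k : ℕ) :
    P.σC * ‖P.p (k+2) - P.p (k+1)‖^2
      ≤ 2*(P.ℓh + P.ℓ₃)^2 * ‖P.z (k+2) - P.z (k+1)‖^2 + 2*P.ℓ₃^2 * ‖P.z (k+1) - P.z k‖^2 := by
  have h1 := P.key_identity (k+1)
  have h2 := P.key_identity k
  have e1 : (ContinuousLinearMap.adjoint P.C) (P.p (k+2))
      = -(P.h' (P.z (k+2)) + P.φ₃' (P.z (k+2)) - P.φ₃' (P.z (k+1))) :=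
    eq_neg_of_add_eq_zero_right h1
  have e2 : (ContinuousLinearMap.adjoint P.C) (P.p (k+1))
      = -(P.h' (P.z (k+1)) + P.φ₃' (P.z (k+1)) - P.φ₃' (P.z k)) :=
    eq_neg_of_add_eq_zero_right h2
  set U : Eu n₃ := P.h' (P.z (k+2)) - P.h' (P.z (k+1)) with hU
  set V : Eu n₃ := P.φ₃' (P.z (k+2)) - P.φ₃' (P.z (k+1)) with hV
  set W : Eu n₃ := P.φ₃' (P.z (k+1)) - P.φ₃' (P.z k) with hW
  have hsub : (ContinuousLinearMap.adjoint P.C) (P.p (k+2) - P.p (k+1)) = -U - V + W := by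
    rw [map_sub, e1, e2, hU, hV, hW]; abel
  set a : ℝ := ‖P.z (k+2) - P.z (k+1)‖ with ha
  set b : ℝ := ‖P.z (k+1) - P.z k‖ with hb
  have hUa : ‖U‖ ≤ P.ℓh * a := P.hlip_h _ _
  have hVa : ‖V‖ ≤ P.ℓ₃ * a := P.hlip_φ₃ _ _
  have hWb : ‖W‖ ≤ P.ℓ₃ * b := P.hlip_φ₃ _ _
  have hn : ‖(ContinuousLinearMap.adjoint P.C) (P.p (k+2) - P.p (k+1))‖
      ≤ (P.ℓh + P.ℓ₃) * a + P.ℓ₃ * b := by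
    rw [hsub]
    calc ‖-U - V + W‖ ≤ ‖-U - V‖ + ‖W‖ := norm_add_le _ _
      _ ≤ ‖-U‖ + ‖V‖ + ‖W‖ := by have := norm_sub_le (-U) V; linarith
      _ = ‖U‖ + ‖V‖ + ‖W‖ := by rw [norm_neg]
      _ ≤ (P.ℓh + P.ℓ₃) * a + P.ℓ₃ * b := by linarith
  have hr := P.hC_rank (P.p (k+2) - P.p (k+1))
  have hsq : ‖(ContinuousLinearMap.adjoint P.C) (P.p (k+2) - P.p (k+1))‖^2
      ≤ ((P.ℓh + P.ℓ₃) * a + P.ℓ₃ * b)^2 :=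
    pow_le_pow_left₀ (norm_nonneg _) hn 2
  have hab : 0 ≤ a := norm_nonneg _
  have hbb : 0 ≤ b := norm_nonneg _
  nlinarith [sq_nonneg ((P.ℓh + P.ℓ₃) * a - P.ℓ₃ * b)]

lemma σ1_facts : P.σ1 ≤ P.μ₁/2 ∧ P.σ1 ≤ P.μ₂/2 ∧
    P.σ1 + P.σ0 + 2*(P.ℓh + P.ℓ₃)^2/(P.α * P.σC) ≤ P.μ₃/2 ∧ 0 < P.σ1 ∧ 0 ≤ P.σ0 := by
  have hασ0 : 0 < P.α * P.σC := mul_pos P.hα_pos P.hσC_pos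
  have hmin1 : min P.μ₁ (min P.μ₂
      (P.μ₃ - 4 * (P.ℓh + P.ℓ₃) ^ 2 / (P.α * P.σC) - 4 * P.ℓ₃ ^ 2 / (P.α * P.σC))) ≤ P.μ₁ :=
    min_le_left _ _
  have hmin2 : min P.μ₁ (min P.μ₂
      (P.μ₃ - 4 * (P.ℓh + P.ℓ₃) ^ 2 / (P.α * P.σC) - 4 * P.ℓ₃ ^ 2 / (P.α * P.σC))) ≤ P.μ₂ :=
    le_trans (min_le_right _ _) (min_le_left _ _)
  have hmin3 : min P.μ₁ (min P.μ₂
      (P.μ₃ - 4 * (P.ℓh + P.ℓ₃) ^ 2 / (P.α * P.σC) - 4 * P.ℓ₃ ^ 2 / (P.α * P.σC)))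
      ≤ P.μ₃ - 4 * (P.ℓh + P.ℓ₃) ^ 2 / (P.α * P.σC) - 4 * P.ℓ₃ ^ 2 / (P.α * P.σC) :=
    le_trans (min_le_right _ _) (min_le_right _ _)
  have hlarge : 4 * ((P.ℓh + P.ℓ₃) ^ 2 + P.ℓ₃ ^ 2) < P.α * (P.μ₃ * P.σC) := by
    have := P.hα_large
    have hμσ : 0 < P.μ₃ * P.σC := mul_pos P.hμ₃_pos P.hσC_pos
    rw [div_lt_iff₀ hμσ] at this
    linarith
  have hE3 : 0 < P.μ₃ - 4 * (P.ℓh + P.ℓ₃) ^ 2 / (P.α * P.σC) - 4 * P.ℓ₃ ^ 2 / (P.α * P.σC) := by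
    rw [sub_sub, ← add_div, ← mul_add, sub_pos, div_lt_iff₀ hασ0]
    have : P.α * (P.μ₃ * P.σC) = P.μ₃ * (P.α * P.σC) := by ring
    linarith
  have hσ1pos : 0 < P.σ1 := by
    rw [σ1]
    have : 0 < min P.μ₁ (min P.μ₂
        (P.μ₃ - 4 * (P.ℓh + P.ℓ₃) ^ 2 / (P.α * P.σC) - 4 * P.ℓ₃ ^ 2 / (P.α * P.σC))) :=
      lt_min P.hμ₁_pos (lt_min P.hμ₂_pos hE3)
    linarith
  have hσ0nn : 0 ≤ P.σ0 := by
    rw [σ0]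
    exact div_nonneg (by positivity) hασ0.le
  have hσ0eq : P.σ0 = (1/2) * (4 * P.ℓ₃ ^ 2 / (P.α * P.σC)) := by rw [σ0]; ring
  have hXeq : 2*(P.ℓh + P.ℓ₃)^2/(P.α * P.σC)
      = (1/2) * (4 * (P.ℓh + P.ℓ₃) ^ 2 / (P.α * P.σC)) := by ring
  refine ⟨by rw [σ1]; linarith, by rw [σ1]; linarith, ?_, hσ1pos, hσ0nn⟩
  rw [σ1, hσ0eq, hXeq]
  linarith

lemma Lhat_descent (k : ℕ) :
    P.Lhat (P.x (k+2)) (P.y (k+2)) (P.z (k+2)) (P.p (k+2)) (P.z (k+1))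
      + P.σ1 * (‖P.x (k+2) - P.x (k+1)‖^2 + ‖P.y (k+2) - P.y (k+1)‖^2
          + ‖P.z (k+2) - P.z (k+1)‖^2)
    ≤ P.Lhat (P.x (k+1)) (P.y (k+1)) (P.z (k+1)) (P.p (k+1)) (P.z k) := by
  obtain ⟨hs1, hs2, hs3, hs1pos, hs0nn⟩ := P.σ1_facts
  have hασ0 : 0 < P.α * P.σC := mul_pos P.hα_pos P.hσC_pos
  have htot := P.descent_total (k+1)
  have hdp := P.dp_bound k
  have hdpn := P.dp_norm (k+1)
  set A2 : ℝ := ‖P.x (k+2) - P.x (k+1)‖^2 with hA2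
  set B2 : ℝ := ‖P.y (k+2) - P.y (k+1)‖^2 with hB2
  set C2 : ℝ := ‖P.z (k+2) - P.z (k+1)‖^2 with hC2
  set D2 : ℝ := ‖P.z (k+1) - P.z k‖^2 with hD2
  set R2 : ℝ := ‖P.A (P.x (k+2)) + P.B (P.y (k+2)) + P.C (P.z (k+2))‖^2 with hR2
  -- α * R2 ≤ (2(ℓh+ℓ₃)² C2 + 2ℓ₃² D2)/(α σC)
  have hkey : P.α * R2 ≤ 2*(P.ℓh + P.ℓ₃)^2/(P.α * P.σC) * C2 + P.σ0 * D2 := by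
    have h1 : P.σC * (P.α^2 * R2) ≤ 2*(P.ℓh + P.ℓ₃)^2 * C2 + 2*P.ℓ₃^2 * D2 := by
      rw [← hdpn]; exact hdp
    rw [σ0]
    rw [div_mul_eq_mul_div, div_mul_eq_mul_div, ← add_div, le_div_iff₀ hασ0]
    have hα := P.hα_pos
    nlinarith [h1]
  have hA2nn : (0:ℝ) ≤ A2 := by rw [hA2]; positivity
  have hB2nn : (0:ℝ) ≤ B2 := by rw [hB2]; positivity
  have hC2nn : (0:ℝ) ≤ C2 := by rw [hC2]; positivity
  simp only [Lhat]
  have e1 := mul_le_mul_of_nonneg_right hs1 hA2nn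
  have e2 := mul_le_mul_of_nonneg_right hs2 hB2nn
  have e3 := mul_le_mul_of_nonneg_right hs3 hC2nn
  nlinarith [htot, hkey, e1, e2, e3]
end BADMM

namespace BADMM
variable {n₁ n₂ n₃ m : ℕ} (P : BADMM n₁ n₂ n₃ m)

/-- primal step sizes squared. -/
def sw (k : ℕ) : ℝ := ‖P.x (k+2) - P.x (k+1)‖^2 + ‖P.y (k+2) - P.y (k+1)‖^2
  + ‖P.z (k+2) - P.z (k+1)‖^2

/-- z-step sizes squared. -/
def dz (k : ℕ) : ℝ := ‖P.z (k+1) - P.z k‖^2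

/-- merit function sequence. -/
def Lh (k : ℕ) : ℝ := P.Lhat (P.x (k+1)) (P.y (k+1)) (P.z (k+1)) (P.p (k+1)) (P.z k)

lemma sw_nonneg (k : ℕ) : 0 ≤ P.sw k := by simp only [sw]; positivity

lemma dz_nonneg (k : ℕ) : 0 ≤ P.dz k := by simp only [dz]; positivity

lemma dz_le_sw (k : ℕ) : P.dz (k+1) ≤ P.sw k := by
  simp only [dz, sw]
  have : (0:ℝ) ≤ ‖P.x (k+2) - P.x (k+1)‖^2 + ‖P.y (k+2) - P.y (k+1)‖^2 := by positivity
  linarith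

lemma Lh_step (k : ℕ) : P.Lh (k+1) + P.σ1 * P.sw k ≤ P.Lh k := by
  simpa only [Lh, sw] using P.Lhat_descent k

lemma dp_bound' (k : ℕ) : P.σC * ‖P.p (k+2) - P.p (k+1)‖^2
    ≤ 2*(P.ℓh + P.ℓ₃)^2 * P.dz (k+1) + 2*P.ℓ₃^2 * P.dz k := by
  simpa only [dz] using P.dp_bound k

lemma dw2_eq (k : ℕ) : P.dw2 (k+1) = P.sw k + ‖P.p (k+2) - P.p (k+1)‖^2 := by
  simp only [dw2, sw]

lemma dw2_nonneg (k : ℕ) : 0 ≤ P.dw2 k := by simp only [dw2]; positivity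

end BADMM

/-- if the primal iterates are bounded, then the dual iterates are bounded,
the series `∑_{k≥1} ‖w^{k+1}−w^k‖²` is finite, and `‖w^{k+1}−w^k‖ → 0`. -/
theorem badmm_asymptotic_regularity {n₁ n₂ n₃ m : ℕ} (P : BADMM n₁ n₂ n₃ m)
    (hbdd : ∃ M : ℝ, ∀ k : ℕ, ‖P.x k‖ ≤ M ∧ ‖P.y k‖ ≤ M ∧ ‖P.z k‖ ≤ M) :
    (∃ M : ℝ, ∀ k : ℕ, ‖P.p k‖ ≤ M) ∧
      Summable (fun k : ℕ => P.dw2 (k+1)) ∧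
      Tendsto (fun k : ℕ => Real.sqrt (P.dw2 k)) atTop (nhds 0) := by
  classical
  obtain ⟨M, hM⟩ := hbdd
  have hM0 : 0 ≤ M := le_trans (norm_nonneg _) (hM 0).1
  obtain ⟨hs1, hs2, hs3, hσ1pos, hσ0nn⟩ := P.σ1_facts
  -- gradient bounds along the iterates
  obtain ⟨Kh, hKh⟩ : ∃ c : ℝ, ∀ u : Eu n₃, ‖u‖ ≤ M → ‖P.h' u‖ ≤ c := by
    refine ⟨P.ℓh * M + ‖P.h' 0‖, fun u hu => ?_⟩
    have h1 := P.hlip_h u 0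
    have h2 := norm_add_le (P.h' u - P.h' 0) (P.h' 0)
    rw [sub_add_cancel] at h2
    rw [sub_zero] at h1
    have h3 : P.ℓh * ‖u‖ ≤ P.ℓh * M := mul_le_mul_of_nonneg_left hu P.hℓh_nonneg
    linarith
  obtain ⟨Kp, hKp⟩ : ∃ c : ℝ, ∀ u : Eu n₃, ‖u‖ ≤ M → ‖P.φ₃' u‖ ≤ c := by
    refine ⟨P.ℓ₃ * M + ‖P.φ₃' 0‖, fun u hu => ?_⟩
    have h1 := P.hlip_φ₃ u 0
    have h2 := norm_add_le (P.φ₃' u - P.φ₃' 0) (P.φ₃' 0)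
    rw [sub_add_cancel] at h2
    rw [sub_zero] at h1
    have h3 : P.ℓ₃ * ‖u‖ ≤ P.ℓ₃ * M := mul_le_mul_of_nonneg_left hu P.hℓ₃_nonneg
    linarith
  -- the dual iterates are bounded
  obtain ⟨Mp, hp⟩ : ∃ Mp : ℝ, ∀ k : ℕ, ‖P.p k‖ ≤ Mp := by
    refine ⟨max ‖P.p 0‖ (Real.sqrt ((Kh + 2*Kp)^2 / P.σC)), fun k => ?_⟩
    cases k with
    | zero => exact le_max_left _ _
    | succ k =>
      refine le_trans ?_ (le_max_right _ _)
      have e : (ContinuousLinearMap.adjoint P.C) (P.p (k+1))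
          = -(P.h' (P.z (k+1)) + P.φ₃' (P.z (k+1)) - P.φ₃' (P.z k)) :=
        eq_neg_of_add_eq_zero_right (P.key_identity k)
      have hn : ‖(ContinuousLinearMap.adjoint P.C) (P.p (k+1))‖ ≤ Kh + 2*Kp := by
        rw [e, norm_neg]
        have c1 : ‖P.h' (P.z (k+1)) + P.φ₃' (P.z (k+1)) - P.φ₃' (P.z k)‖
            ≤ ‖P.h' (P.z (k+1)) + P.φ₃' (P.z (k+1))‖ + ‖P.φ₃' (P.z k)‖ := norm_sub_le _ _
        have c2 : ‖P.h' (P.z (k+1)) + P.φ₃' (P.z (k+1))‖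
            ≤ ‖P.h' (P.z (k+1))‖ + ‖P.φ₃' (P.z (k+1))‖ := norm_add_le _ _
        have c3 := hKh (P.z (k+1)) (hM (k+1)).2.2
        have c4 := hKp (P.z (k+1)) (hM (k+1)).2.2
        have c5 := hKp (P.z k) (hM k).2.2
        linarith
      have hr := P.hC_rank (P.p (k+1))
      have hsq : ‖(ContinuousLinearMap.adjoint P.C) (P.p (k+1))‖^2 ≤ (Kh + 2*Kp)^2 :=
        pow_le_pow_left₀ (norm_nonneg _) hn 2
      have h2 : ‖P.p (k+1)‖^2 ≤ (Kh + 2*Kp)^2 / P.σC := by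
        rw [le_div_iff₀ P.hσC_pos]
        nlinarith
      calc ‖P.p (k+1)‖ = Real.sqrt (‖P.p (k+1)‖^2) := (Real.sqrt_sq (norm_nonneg _)).symm
        _ ≤ Real.sqrt ((Kh + 2*Kp)^2 / P.σC) := Real.sqrt_le_sqrt h2
  have hMpnn : 0 ≤ Mp := le_trans (norm_nonneg _) (hp 0)
  -- a uniform bound on the residuals
  obtain ⟨Mr, hMr⟩ : ∃ Mr : ℝ, ∀ k : ℕ, ‖P.A (P.x k) + P.B (P.y k) + P.C (P.z k)‖ ≤ Mr := by
    refine ⟨‖P.A‖ * M + ‖P.B‖ * M + ‖P.C‖ * M, fun k => ?_⟩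
    have c1 : ‖P.A (P.x k) + P.B (P.y k) + P.C (P.z k)‖
        ≤ ‖P.A (P.x k) + P.B (P.y k)‖ + ‖P.C (P.z k)‖ := norm_add_le _ _
    have c2 : ‖P.A (P.x k) + P.B (P.y k)‖ ≤ ‖P.A (P.x k)‖ + ‖P.B (P.y k)‖ := norm_add_le _ _
    have c3 : ‖P.A (P.x k)‖ ≤ ‖P.A‖ * M :=
      le_trans (P.A.le_opNorm _) (mul_le_mul_of_nonneg_left (hM k).1 (norm_nonneg _))
    have c4 : ‖P.B (P.y k)‖ ≤ ‖P.B‖ * M :=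
      le_trans (P.B.le_opNorm _) (mul_le_mul_of_nonneg_left (hM k).2.1 (norm_nonneg _))
    have c5 : ‖P.C (P.z k)‖ ≤ ‖P.C‖ * M :=
      le_trans (P.C.le_opNorm _) (mul_le_mul_of_nonneg_left (hM k).2.2 (norm_nonneg _))
    linarith
  -- lower bound on the merit sequence
  have hhdiff : Differentiable ℝ P.h := fun v => (P.hgrad_h v).hasFDerivAt.differentiableAt
  obtain ⟨cf, hcf⟩ := lsc_bdd P.hf_lsc M
  obtain ⟨cg, hcg⟩ := lsc_bdd P.hg_lsc M
  obtain ⟨ch, hch⟩ := lsc_bdd hhdiff.continuous.lowerSemicontinuous M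
  obtain ⟨Lmin, hLhlow⟩ : ∃ c : ℝ, ∀ k : ℕ, c ≤ P.Lh k := by
    refine ⟨cf + cg + ch - Mp * Mr, fun k => ?_⟩
    have hip : |(⟪P.p (k+1), P.A (P.x (k+1)) + P.B (P.y (k+1)) + P.C (P.z (k+1))⟫ : ℝ)|
        ≤ Mp * Mr := by
      refine le_trans (abs_real_inner_le_norm _ _) ?_
      exact mul_le_mul (hp (k+1)) (hMr (k+1)) (norm_nonneg _) hMpnn
    have hip' := (abs_le.mp hip).1
    have c1 := hcf (P.x (k+1)) (hM (k+1)).1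
    have c2 := hcg (P.y (k+1)) (hM (k+1)).2.1
    have c3 := hch (P.z (k+1)) (hM (k+1)).2.2
    have c4 : (0:ℝ) ≤ P.α/2 * ‖P.A (P.x (k+1)) + P.B (P.y (k+1)) + P.C (P.z (k+1))‖^2 := by
      have := P.hα_pos; positivity
    have c5 : (0:ℝ) ≤ P.σ0 * ‖P.z (k+1) - P.z k‖^2 :=
      mul_nonneg hσ0nn (by positivity)
    simp only [BADMM.Lh, BADMM.Lhat, BADMM.L, Lag]
    linarith
  -- telescoping gives summability of the primal steps
  have htel : ∀ N, P.Lh N + P.σ1 * ∑ i ∈ Finset.range N, P.sw i ≤ P.Lh 0 := by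
    intro N
    induction N with
    | zero => simp
    | succ N ih =>
      rw [Finset.sum_range_succ]
      have := P.Lh_step N
      nlinarith
  have hsum_le : ∀ N, ∑ i ∈ Finset.range N, P.sw i ≤ (P.Lh 0 - Lmin) / P.σ1 := by
    intro N
    rw [le_div_iff₀ hσ1pos]
    have h1 := htel N
    have h2 := hLhlow N
    nlinarith
  have hs_summable : Summable P.sw := summable_of_sum_range_le P.sw_nonneg hsum_le
  have hdz1_summable : Summable (fun k => P.dz (k+1)) :=
    Summable.of_nonneg_of_le (fun k => P.dz_nonneg _) P.dz_le_sw hs_summable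
  have hdz_summable : Summable P.dz := (summable_nat_add_iff 1).mp hdz1_summable
  -- summability of dw2
  have hbound : ∀ k, P.dw2 (k+1) ≤ P.sw k + ((2*(P.ℓh + P.ℓ₃)^2/P.σC) * P.dz (k+1)
      + (2*P.ℓ₃^2/P.σC) * P.dz k) := by
    intro k
    have hdp := P.dp_bound' k
    have h1 : ‖P.p (k+2) - P.p (k+1)‖^2 ≤ (2*(P.ℓh + P.ℓ₃)^2/P.σC) * P.dz (k+1)
        + (2*P.ℓ₃^2/P.σC) * P.dz k := by
      rw [div_mul_eq_mul_div, div_mul_eq_mul_div, ← add_div, le_div_iff₀ P.hσC_pos]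
      nlinarith
    have h2 := P.dw2_eq k
    linarith
  have hbsummable : Summable (fun k => P.sw k + ((2*(P.ℓh + P.ℓ₃)^2/P.σC) * P.dz (k+1)
      + (2*P.ℓ₃^2/P.σC) * P.dz k)) :=
    hs_summable.add ((hdz1_summable.mul_left _).add (hdz_summable.mul_left _))
  have hdw2s : Summable (fun k : ℕ => P.dw2 (k+1)) :=
    Summable.of_nonneg_of_le (fun k => P.dw2_nonneg _) hbound hbsummable
  refine ⟨⟨Mp, hp⟩, hdw2s, ?_⟩
  have hdw2to : Tendsto (fun k : ℕ => P.dw2 (k+1)) atTop (nhds 0) :=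
    hdw2s.tendsto_atTop_zero
  have hdw2to' : Tendsto P.dw2 atTop (nhds 0) := by
    rw [← tendsto_add_atTop_iff_nat 1]
    exact hdw2to
  have hfin := (Real.continuous_sqrt.tendsto 0).comp hdw2to'
  rw [Real.sqrt_zero] at hfin
  exact hfin
end
end

section
/- Under the standing assumptions on the 3-block Bregman ADMM, suppose the sequence {(x^k, y^k, z^k)} is bounded and let (x*, y*, z*, p*) be any cluster point of the sequence w^k = (x^k, y^k, z^k, p^k), i.e., the limit of some subsequence w^{k_j}. Then Ax* + By* + Cz* = 0 and Cᵀp* = −∇h(z*). -/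
open RealInnerProductSpace Filter

noncomputable section

section Helpers
set_option linter.unusedSectionVars false
open InnerProductSpace
variable {E F : Type*} [NormedAddCommGroup E] [InnerProductSpace ℝ E] [CompleteSpace E]
  [NormedAddCommGroup F] [InnerProductSpace ℝ F] [CompleteSpace F]

lemma hga_of_fd {f : E → ℝ} {D : E →L[ℝ] ℝ} {g v : E} (hD : HasFDerivAt f D v)
    (h : ∀ w, D w = ⟪g, w⟫) : HasGradientAt f g v := by
  rw [hasGradientAt_iff_hasFDerivAt]
  refine hD.congr_fderiv ?_
  ext w
  simp [toDual_apply_apply, h w]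

lemma fd_inner_affine (p u : F) (C : E →L[ℝ] F) (ξ : E) :
    HasFDerivAt (fun ζ : E => ⟪p, u + C ζ⟫) (toDual ℝ E ((ContinuousLinearMap.adjoint C) p)) ξ := by
  have he : (fun ζ : E => ⟪p, u + C ζ⟫) = fun ζ => ⟪p, u⟫ + (toDual ℝ E ((ContinuousLinearMap.adjoint C) p)) ζ := by
    funext ζ
    simp [inner_add_right, toDual_apply_apply, ContinuousLinearMap.adjoint_inner_left]
  rw [he]
  exact ((toDual ℝ E ((ContinuousLinearMap.adjoint C) p)).hasFDerivAt).const_add _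

lemma fd_quad (α : ℝ) (u : F) (C : E →L[ℝ] F) (ξ : E) :
    HasFDerivAt (fun ζ : E => α / 2 * ‖u + C ζ‖ ^ 2)
      (toDual ℝ E (α • (ContinuousLinearMap.adjoint C) (u + C ξ))) ξ := by
  have he : (fun ζ : E => α / 2 * ‖u + C ζ‖ ^ 2)
      = fun ζ => α / 2 * ⟪u + C ζ, u + C ζ⟫ := by
    funext ζ; rw [real_inner_self_eq_norm_sq]
  rw [he]
  have hg : HasFDerivAt (fun ζ : E => u + C ζ) C ξ := C.hasFDerivAt.const_add u
  have hi := (hg.inner ℝ hg).const_mul (α / 2)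
  refine hi.congr_fderiv ?_
  ext w
  simp only [toDual_apply_apply, ContinuousLinearMap.coe_smul', Pi.smul_apply,
    ContinuousLinearMap.comp_apply, ContinuousLinearMap.prod_apply, fderivInnerCLM_apply,
    smul_eq_mul, real_inner_smul_left, ContinuousLinearMap.adjoint_inner_left]
  rw [real_inner_comm (C w) (u + C ξ)]
  ring

lemma hga_normsq (c : ℝ) (v : E) :
    HasGradientAt (fun w : E => c * ‖w‖ ^ 2) ((2 * c) • v) v := by
  have he : (fun w : E => c * ‖w‖ ^ 2) = fun w => c * ⟪w, w⟫ := by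
    funext w; rw [real_inner_self_eq_norm_sq]
  rw [hasGradientAt_iff_hasFDerivAt, he]
  have hi := ((hasFDerivAt_id v).inner ℝ (hasFDerivAt_id v)).const_mul c
  refine hi.congr_fderiv ?_
  ext w
  simp only [toDual_apply_apply, ContinuousLinearMap.coe_smul', Pi.smul_apply,
    ContinuousLinearMap.comp_apply, ContinuousLinearMap.prod_apply, fderivInnerCLM_apply,
    smul_eq_mul, real_inner_smul_left, ContinuousLinearMap.coe_id', id_eq]
  rw [real_inner_comm w v]
  ring

lemma fd_inner_sub (w z : E) (ξ : E) :
    HasFDerivAt (fun ζ : E => ⟪w, ζ - z⟫) (toDual ℝ E w) ξ := by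
  have he : (fun ζ : E => ⟪w, ζ - z⟫) = fun ζ => (toDual ℝ E w) ζ - ⟪w, z⟫ := by
    funext ζ; simp [inner_sub_right, toDual_apply_apply]
  rw [he]
  exact (toDual ℝ E w).hasFDerivAt.sub_const _

/-- Gradient inequality for a convex differentiable function. -/
lemma convex_grad_ineq {φ : E → ℝ} {gv : E} {u v : E}
    (hconv : ConvexOn ℝ Set.univ φ) (hgrad : HasGradientAt φ gv v) :
    φ v + ⟪gv, u - v⟫ ≤ φ u := by
  set d := u - v with hd
  have hψ : HasDerivAt (fun t : ℝ => φ (v + t • d)) ⟪gv, d⟫ 0 := by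
    have hline : HasDerivAt (fun t : ℝ => v + t • d) d 0 := by
      simpa using ((hasDerivAt_id (0 : ℝ)).smul_const d).const_add v
    have hF : HasFDerivAt φ (toDual ℝ E gv) ((fun t : ℝ => v + t • d) 0) := by
      simpa using hgrad.hasFDerivAt
    have hc := hF.comp_hasDerivAt 0 hline
    simp only [toDual_apply_apply] at hc
    exact hc
  have hslope := hasDerivAt_iff_tendsto_slope.1 hψ
  have hslope' : Tendsto (slope (fun t : ℝ => φ (v + t • d)) 0) (nhdsWithin 0 (Set.Ioi 0))
      (nhds ⟪gv, d⟫) := hslope.mono_left (nhdsWithin_mono _ (fun t ht => ne_of_gt ht))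
  have hub : ∀ᶠ t in nhdsWithin (0:ℝ) (Set.Ioi 0),
      slope (fun t : ℝ => φ (v + t • d)) 0 t ≤ φ u - φ v := by
    filter_upwards [Ioc_mem_nhdsGT_of_mem (Set.left_mem_Ico.2 one_pos)] with t ht
    have ht0 : (0:ℝ) < t := ht.1
    have ht1 : t ≤ 1 := ht.2
    have hcombo : v + t • d = t • u + (1 - t) • v := by
      rw [hd]; module
    have hcv := hconv.2 (Set.mem_univ u) (Set.mem_univ v) ht0.le (by linarith : (0:ℝ) ≤ 1 - t)
      (by ring)
    rw [← hcombo] at hcv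
    rw [slope_def_field]
    simp only [smul_eq_mul] at hcv
    have hstep : φ (v + t • d) - φ v ≤ t * (φ u - φ v) := by linarith
    have h00 : v + (0:ℝ) • d = v := by simp
    rw [h00, sub_zero, div_le_iff₀ ht0]
    exact hstep.trans_eq (mul_comm _ _)
  have := le_of_tendsto hslope' hub
  linarith [this]

/-- Bregman distance lower bound for a strongly convex kernel. -/
lemma strong_grad_ineq {μ : ℝ} {φ : E → ℝ} {φv : E} {u v : E}
    (hsc : ConvexOn ℝ Set.univ (fun w => φ w - μ / 2 * ‖w‖ ^ 2))
    (hgrad : HasGradientAt φ φv v) :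
    μ / 2 * ‖u - v‖ ^ 2 ≤ φ u - φ v - ⟪φv, u - v⟫ := by
  have hq := hga_normsq (μ / 2) v
  have hgrad' : HasGradientAt (fun w => φ w - μ / 2 * ‖w‖ ^ 2) (φv - (2 * (μ/2)) • v) v := by
    rw [hasGradientAt_iff_hasFDerivAt] at *
    have := hgrad.sub hq
    refine this.congr_fderiv ?_
    exact (map_sub (toDual ℝ E) _ _).symm
  have key := convex_grad_ineq (u := u) hsc hgrad'
  have hexp : ⟪φv - (2 * (μ/2)) • v, u - v⟫ = ⟪φv, u - v⟫ - μ * ⟪v, u - v⟫ := by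
    rw [inner_sub_left, real_inner_smul_left]; ring
  have hid : ‖u - v‖ ^ 2 = ‖u‖ ^ 2 - 2 * ⟪v, u⟫ + ‖v‖ ^ 2 := by
    rw [norm_sub_sq_real, real_inner_comm]
  have hiv : ⟪v, u - v⟫ = ⟪v, u⟫ - ‖v‖ ^ 2 := by
    rw [inner_sub_right, real_inner_self_eq_norm_sq]
  rw [hexp] at key
  have e1 : μ / 2 * ‖u - v‖ ^ 2 = μ / 2 * ‖u‖ ^ 2 - μ * ⟪v, u⟫ + μ / 2 * ‖v‖ ^ 2 := by
    rw [hid]; ring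
  have e2 : μ * ⟪v, u - v⟫ = μ * ⟪v, u⟫ - μ * ‖v‖ ^ 2 := by rw [hiv]; ring
  linarith [key, e1, e2]

/-- Quadratic growth at a global minimizer of a strongly convex function. -/
lemma strong_min_growth {μ : ℝ} {F₀ : E → ℝ} {a : E}
    (hsc : ConvexOn ℝ Set.univ (fun w => F₀ w - μ / 2 * ‖w‖ ^ 2))
    (hmin : ∀ ξ, F₀ a ≤ F₀ ξ) (ξ : E) :
    F₀ a + μ / 2 * ‖ξ - a‖ ^ 2 ≤ F₀ ξ := by
  have hS : StrongConvexOn Set.univ μ F₀ := strongConvexOn_iff_convex.mpr hsc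
  have key : ∀ t : ℝ, 0 < t → t ≤ 1 → F₀ a + (1 - t) * (μ / 2 * ‖ξ - a‖ ^ 2) ≤ F₀ ξ := by
    intro t ht0 ht1
    have h := hS.2 (Set.mem_univ ξ) (Set.mem_univ a) ht0.le (by linarith : (0:ℝ) ≤ 1 - t)
      (by ring)
    have hm := hmin (t • ξ + (1 - t) • a)
    simp only [smul_eq_mul] at h
    have : t * (F₀ a + (1 - t) * (μ / 2 * ‖ξ - a‖ ^ 2)) ≤ t * F₀ ξ := by nlinarith [h, hm]
    exact le_of_mul_le_mul_left (by linarith [this]) ht0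
  have htend : Tendsto (fun n : ℕ => F₀ a + (1 - 1 / (n + 1)) * (μ / 2 * ‖ξ - a‖ ^ 2)) atTop
      (nhds (F₀ a + μ / 2 * ‖ξ - a‖ ^ 2)) := by
    have h1 : Tendsto (fun n : ℕ => 1 / ((n : ℝ) + 1)) atTop (nhds 0) :=
      tendsto_one_div_add_atTop_nhds_zero_nat
    have := ((tendsto_const_nhds (x := (1:ℝ)) (f := atTop (α := ℕ))).sub h1).mul
      (tendsto_const_nhds (x := μ / 2 * ‖ξ - a‖ ^ 2))
    simpa using (tendsto_const_nhds (x := F₀ a) (f := atTop (α := ℕ))).add this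
  refine le_of_tendsto htend (Filter.Eventually.of_forall fun n => ?_)
  refine key (1 / (n + 1)) (by positivity) ?_
  rw [div_le_one (by positivity)]
  linarith [Nat.cast_nonneg (α := ℝ) n]

/-- An affine function `ζ ↦ c + ⟪w, ζ⟫` is convex. -/
lemma convexOn_affine (c : ℝ) (w : E) :
    ConvexOn ℝ Set.univ (fun ζ : E => c + ⟪w, ζ⟫) := by
  refine ⟨convex_univ, fun ζ₁ _ ζ₂ _ a b ha hb hab => le_of_eq ?_⟩
  simp only [smul_eq_mul, inner_add_right, real_inner_smul_right]
  have hc : a * c + b * c = c := by rw [← add_mul, hab, one_mul]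
  linarith [hc]

/-- `ζ ↦ c * ‖u + C ζ‖²` is convex for `c ≥ 0`. -/
lemma convexOn_quad_s7 (c : ℝ) (hc : 0 ≤ c) (u : F) (C : E →L[ℝ] F) :
    ConvexOn ℝ Set.univ (fun ζ : E => c * ‖u + C ζ‖ ^ 2) := by
  have hn : ConvexOn ℝ Set.univ (fun w : F => ‖w‖ ^ 2) := by
    refine ⟨convex_univ, fun w₁ _ w₂ _ a b ha hb hab => ?_⟩
    simp only [smul_eq_mul]
    have hA := norm_add_sq_real (a • w₁) (b • w₂)
    have h1 : ‖a • w₁‖ ^ 2 = a ^ 2 * ‖w₁‖ ^ 2 := by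
      rw [norm_smul, Real.norm_eq_abs, mul_pow, sq_abs]
    have h2 : ‖b • w₂‖ ^ 2 = b ^ 2 * ‖w₂‖ ^ 2 := by
      rw [norm_smul, Real.norm_eq_abs, mul_pow, sq_abs]
    have h3 : ⟪a • w₁, b • w₂⟫ = a * b * ⟪w₁, w₂⟫ := by
      rw [real_inner_smul_left, real_inner_smul_right]; ring
    have hsq : ‖w₁ - w₂‖ ^ 2 = ‖w₁‖ ^ 2 - 2 * ⟪w₁, w₂⟫ + ‖w₂‖ ^ 2 := norm_sub_sq_real w₁ w₂
    have hkey : 0 ≤ a * b * (‖w₁‖ ^ 2 - 2 * ⟪w₁, w₂⟫ + ‖w₂‖ ^ 2) := by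
      rw [← hsq]; exact mul_nonneg (mul_nonneg ha hb) (sq_nonneg _)
    have hab' : b = 1 - a := by linarith
    subst hab'
    nlinarith [hsq, hA, h1, h2, h3, hkey]
  refine ⟨convex_univ, fun ζ₁ _ ζ₂ _ a b ha hb hab => ?_⟩
  have hcombo : u + C (a • ζ₁ + b • ζ₂) = a • (u + C ζ₁) + b • (u + C ζ₂) := by
    have hu : u = a • u + b • u := by rw [← add_smul, hab, one_smul]
    conv_lhs => rw [hu]
    rw [map_add, map_smul, map_smul]
    module
  have := hn.2 (Set.mem_univ (u + C ζ₁)) (Set.mem_univ (u + C ζ₂)) ha hb hab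
  simp only [smul_eq_mul] at this ⊢
  rw [hcombo]
  nlinarith [this]

end Helpers

section BADMMLemmas
open InnerProductSpace ContinuousLinearMap
variable {n₁ n₂ n₃ m : ℕ} (P : BADMM n₁ n₂ n₃ m)

/-- residual -/
def resid (k : ℕ) : Eu m := P.A (P.x k) + P.B (P.y k) + P.C (P.z k)

lemma breg_self {n : ℕ} (φ : Eu n → ℝ) (φ' : Eu n → Eu n) (v : Eu n) :
    Breg φ φ' v v = 0 := by simp [Breg]

lemma breg_nonneg' {n : ℕ} {φ : Eu n → ℝ} {φ' : Eu n → Eu n}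
    (hconv : ConvexOn ℝ Set.univ φ) (hgrad : ∀ v, HasGradientAt φ (φ' v) v)
    (u v : Eu n) : 0 ≤ Breg φ φ' u v := by
  have := convex_grad_ineq (u := u) hconv (hgrad v)
  simp only [Breg]; linarith

lemma subgrad (k : ℕ) (ξ : Eu n₃) :
    HasGradientAt
      (fun ζ => Lag P.f P.g P.h P.A P.B P.C P.α (P.x (k+1)) (P.y (k+1)) ζ (P.p k)
        + Breg P.φ₃ P.φ₃' ζ (P.z k))
      (P.h' ξ + (adjoint P.C) (P.p k)
        + P.α • (adjoint P.C) (P.A (P.x (k+1)) + P.B (P.y (k+1)) + P.C ξ)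
        + P.φ₃' ξ - P.φ₃' (P.z k)) ξ := by
  simp only [Lag, Breg]
  have hh := (P.hgrad_h ξ).hasFDerivAt
  have hφ := (P.hgrad_φ₃ ξ).hasFDerivAt
  have hi := fd_inner_affine (P.p k) (P.A (P.x (k+1)) + P.B (P.y (k+1))) P.C ξ
  have hq := fd_quad P.α (P.A (P.x (k+1)) + P.B (P.y (k+1))) P.C ξ
  have hs := fd_inner_sub (P.φ₃' (P.z k)) (P.z k) ξ
  have key := (((hh.const_add (P.f (P.x (k+1)) + P.g (P.y (k+1)))).add hi).add hq).add
    ((hφ.sub_const (P.φ₃ (P.z k))).sub hs)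
  rw [hasGradientAt_iff_hasFDerivAt]
  refine key.congr_fderiv ?_
  ext w
  simp only [toDual_apply_apply, ContinuousLinearMap.add_apply, ContinuousLinearMap.sub_apply,
    inner_add_left, inner_sub_left, real_inner_smul_left]
  ring

lemma opt_z (k : ℕ) :
    P.h' (P.z (k+1)) + (adjoint P.C) (P.p (k+1)) + P.φ₃' (P.z (k+1)) - P.φ₃' (P.z k) = 0 := by
  have hg := subgrad P k (P.z (k+1))
  have hloc : IsLocalMin
      (fun ζ => Lag P.f P.g P.h P.A P.B P.C P.α (P.x (k+1)) (P.y (k+1)) ζ (P.p k)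
        + Breg P.φ₃ P.φ₃' ζ (P.z k)) (P.z (k+1)) :=
    Filter.Eventually.of_forall (P.hz_min k)
  have h0 := hloc.hasFDerivAt_eq_zero (hasGradientAt_iff_hasFDerivAt.mp hg)
  have hG : P.h' (P.z (k+1)) + (adjoint P.C) (P.p k)
      + P.α • (adjoint P.C) (P.A (P.x (k+1)) + P.B (P.y (k+1)) + P.C (P.z (k+1)))
      + P.φ₃' (P.z (k+1)) - P.φ₃' (P.z k) = 0 := by
    apply (InnerProductSpace.toDual ℝ (Eu n₃)).injective
    rw [h0]; simp
  rw [P.hp_upd k, map_add, map_smul]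
  rw [← hG]
  abel

lemma cadj_p (k : ℕ) :
    (adjoint P.C) (P.p (k+1)) =
      P.φ₃' (P.z k) - P.h' (P.z (k+1)) - P.φ₃' (P.z (k+1)) := by
  apply eq_of_sub_eq_zero
  have e1 : (adjoint P.C) (P.p (k+1)) -
      (P.φ₃' (P.z k) - P.h' (P.z (k+1)) - P.φ₃' (P.z (k+1)))
      = P.h' (P.z (k+1)) + (adjoint P.C) (P.p (k+1)) + P.φ₃' (P.z (k+1)) - P.φ₃' (P.z k) := by
    abel
  rw [e1, opt_z]
lemma descent_primal (k : ℕ) :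
    Lag P.f P.g P.h P.A P.B P.C P.α (P.x (k+1)) (P.y (k+1)) (P.z (k+1)) (P.p k)
      + P.μ₃ / 2 * ‖P.z (k+1) - P.z k‖ ^ 2
    ≤ Lag P.f P.g P.h P.A P.B P.C P.α (P.x k) (P.y k) (P.z k) (P.p k) := by
  have hx := P.hx_min k (P.x k)
  have hy := P.hy_min k (P.y k)
  rw [breg_self] at hx hy
  have hB1 := breg_nonneg' P.hφ₁_convex P.hgrad_φ₁ (P.x (k+1)) (P.x k)
  have hB2 := breg_nonneg' P.hφ₂_convex P.hgrad_φ₂ (P.y (k+1)) (P.y k)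
  have hB3 := breg_nonneg' P.hφ₃_convex P.hgrad_φ₃ (P.z (k+1)) (P.z k)
  have step3 :
      Lag P.f P.g P.h P.A P.B P.C P.α (P.x (k+1)) (P.y (k+1)) (P.z (k+1)) (P.p k)
        + P.μ₃ / 2 * ‖P.z (k+1) - P.z k‖ ^ 2
      ≤ Lag P.f P.g P.h P.A P.B P.C P.α (P.x (k+1)) (P.y (k+1)) (P.z k) (P.p k) := by
    have hz := P.hz_min k (P.z k)
    rw [breg_self] at hz
    rcases P.hsc₃ with hsch | hscφ
    · -- h strongly convex: use quadratic growth of the whole subproblem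
      set F₀ : Eu n₃ → ℝ := fun ζ =>
        Lag P.f P.g P.h P.A P.B P.C P.α (P.x (k+1)) (P.y (k+1)) ζ (P.p k)
          + Breg P.φ₃ P.φ₃' ζ (P.z k) with hF₀
      have hconv : ConvexOn ℝ Set.univ (fun w => F₀ w - P.μ₃ / 2 * ‖w‖ ^ 2) := by
        have c1 : ConvexOn ℝ Set.univ (fun ζ : Eu n₃ => P.h ζ - P.μ₃ / 2 * ‖ζ‖ ^ 2) := hsch
        have c2 := convexOn_affine
          (P.f (P.x (k+1)) + P.g (P.y (k+1))
            + ⟪P.p k, P.A (P.x (k+1)) + P.B (P.y (k+1))⟫)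
          ((adjoint P.C) (P.p k))
        have c3 := convexOn_quad_s7 (P.α / 2) (by linarith [P.hα_pos])
          (P.A (P.x (k+1)) + P.B (P.y (k+1))) P.C
        have c4 : ConvexOn ℝ Set.univ P.φ₃ := P.hφ₃_convex
        have c5 := convexOn_affine
          (-P.φ₃ (P.z k) + ⟪P.φ₃' (P.z k), P.z k⟫) (-P.φ₃' (P.z k))
        have hsum := (((c1.add c2).add c3).add c4).add c5
        have heq : (fun w => F₀ w - P.μ₃ / 2 * ‖w‖ ^ 2)
            = fun ζ : Eu n₃ =>
              ((((P.h ζ - P.μ₃ / 2 * ‖ζ‖ ^ 2)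
              + ((P.f (P.x (k+1)) + P.g (P.y (k+1))
                  + ⟪P.p k, P.A (P.x (k+1)) + P.B (P.y (k+1))⟫)
                  + ⟪(adjoint P.C) (P.p k), ζ⟫))
              + P.α / 2 * ‖P.A (P.x (k+1)) + P.B (P.y (k+1)) + P.C ζ‖ ^ 2)
              + P.φ₃ ζ)
              + ((-P.φ₃ (P.z k) + ⟪P.φ₃' (P.z k), P.z k⟫) + ⟪-P.φ₃' (P.z k), ζ⟫) := by
          funext ζ
          simp only [hF₀, Lag, Breg, inner_add_right, inner_sub_right,
            ContinuousLinearMap.adjoint_inner_left, inner_neg_left, add_assoc]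
          ring
        rw [heq]
        exact hsum
      have hgrow := strong_min_growth hconv (P.hz_min k) (P.z k)
      have hFz : F₀ (P.z k) = Lag P.f P.g P.h P.A P.B P.C P.α (P.x (k+1)) (P.y (k+1)) (P.z k) (P.p k) := by
        rw [hF₀]; simp [breg_self]
      have hFz1 : Lag P.f P.g P.h P.A P.B P.C P.α (P.x (k+1)) (P.y (k+1)) (P.z (k+1)) (P.p k)
          ≤ F₀ (P.z (k+1)) := by
        rw [hF₀]; simp only []; linarith [hB3]
      rw [hFz, norm_sub_rev] at hgrow
      linarith [hgrow, hFz1]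
    · -- φ₃ strongly convex
      have hb := strong_grad_ineq (u := P.z (k+1)) hscφ (P.hgrad_φ₃ (P.z k))
      have : P.μ₃ / 2 * ‖P.z (k+1) - P.z k‖ ^ 2 ≤ Breg P.φ₃ P.φ₃' (P.z (k+1)) (P.z k) := by
        simpa [Breg] using hb
      linarith [hz, this]
  have hx' := le_trans (by linarith [hB1] :
    Lag P.f P.g P.h P.A P.B P.C P.α (P.x (k+1)) (P.y k) (P.z k) (P.p k)
      ≤ Lag P.f P.g P.h P.A P.B P.C P.α (P.x (k+1)) (P.y k) (P.z k) (P.p k)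
        + Breg P.φ₁ P.φ₁' (P.x (k+1)) (P.x k)) hx
  have hy' := le_trans (by linarith [hB2] :
    Lag P.f P.g P.h P.A P.B P.C P.α (P.x (k+1)) (P.y (k+1)) (P.z k) (P.p k)
      ≤ Lag P.f P.g P.h P.A P.B P.C P.α (P.x (k+1)) (P.y (k+1)) (P.z k) (P.p k)
        + Breg P.φ₂ P.φ₂' (P.y (k+1)) (P.y k)) hy
  linarith [step3, hx', hy']

/-- The descent coefficient. -/
def delta : ℝ := P.μ₃ / 2 - 2 * (P.ℓh + P.ℓ₃) ^ 2 * (P.α * P.σC)⁻¹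
  - 2 * P.ℓ₃ ^ 2 * (P.α * P.σC)⁻¹

/-- The (shifted) Lyapunov sequence. -/
def Sseq (k : ℕ) : ℝ :=
  Lag P.f P.g P.h P.A P.B P.C P.α (P.x (k+1)) (P.y (k+1)) (P.z (k+1)) (P.p (k+1))
    + P.σ0 * ‖P.z (k+1) - P.z k‖ ^ 2

lemma delta_pos : 0 < delta P := by
  have hc : 0 < P.α * P.σC := mul_pos P.hα_pos P.hσC_pos
  have hci : 0 < (P.α * P.σC)⁻¹ := inv_pos.mpr hc
  have h := P.hα_large
  rw [div_lt_iff₀ (mul_pos P.hμ₃_pos P.hσC_pos)] at h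
  have h2 : 4 * ((P.ℓh + P.ℓ₃) ^ 2 + P.ℓ₃ ^ 2) * (P.α * P.σC)⁻¹ < P.μ₃ := by
    rw [← div_eq_mul_inv, div_lt_iff₀ hc]
    nlinarith [h]
  have : delta P = P.μ₃ / 2
      - (4 * ((P.ℓh + P.ℓ₃) ^ 2 + P.ℓ₃ ^ 2) * (P.α * P.σC)⁻¹) / 2 := by
    rw [delta]; ring
  rw [this]
  linarith [h2]

lemma sigma0_eq : P.σ0 = 2 * P.ℓ₃ ^ 2 * (P.α * P.σC)⁻¹ := by
  rw [BADMM.σ0, div_eq_mul_inv]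

lemma sigma0_nonneg : 0 ≤ P.σ0 := by
  rw [sigma0_eq]
  have hc : 0 < P.α * P.σC := mul_pos P.hα_pos P.hσC_pos
  positivity

lemma lag_p_step (k : ℕ) :
    Lag P.f P.g P.h P.A P.B P.C P.α (P.x (k+1)) (P.y (k+1)) (P.z (k+1)) (P.p (k+1))
      = Lag P.f P.g P.h P.A P.B P.C P.α (P.x (k+1)) (P.y (k+1)) (P.z (k+1)) (P.p k)
        + P.α * ‖resid P (k+1)‖ ^ 2 := by
  have hR : ⟪P.p k + P.α • (P.A (P.x (k+1)) + P.B (P.y (k+1)) + P.C (P.z (k+1))),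
        P.A (P.x (k+1)) + P.B (P.y (k+1)) + P.C (P.z (k+1))⟫
      = ⟪P.p k, P.A (P.x (k+1)) + P.B (P.y (k+1)) + P.C (P.z (k+1))⟫
        + P.α * ‖P.A (P.x (k+1)) + P.B (P.y (k+1)) + P.C (P.z (k+1))‖ ^ 2 := by
    rw [inner_add_left, real_inner_smul_left, real_inner_self_eq_norm_sq]
  simp only [Lag, P.hp_upd k, resid, hR]
  ring

lemma dp_bound (k : ℕ) :
    P.σC * (P.α ^ 2 * ‖resid P (k+2)‖ ^ 2)
      ≤ 2 * (P.ℓh + P.ℓ₃) ^ 2 * ‖P.z (k+2) - P.z (k+1)‖ ^ 2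
        + 2 * P.ℓ₃ ^ 2 * ‖P.z (k+1) - P.z k‖ ^ 2 := by
  have hdp : P.p (k+2) - P.p (k+1) = P.α • resid P (k+2) := by
    rw [P.hp_upd (k+1)]; simp [resid]
  have hCd : (ContinuousLinearMap.adjoint P.C) (P.α • resid P (k+2))
      = -(P.h' (P.z (k+2)) - P.h' (P.z (k+1)))
        + -(P.φ₃' (P.z (k+2)) - P.φ₃' (P.z (k+1)))
        + (P.φ₃' (P.z (k+1)) - P.φ₃' (P.z k)) := by
    rw [← hdp, map_sub, cadj_p P (k+1), cadj_p P k]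
    abel
  have hnorm : ‖(ContinuousLinearMap.adjoint P.C) (P.α • resid P (k+2))‖
      ≤ (P.ℓh + P.ℓ₃) * ‖P.z (k+2) - P.z (k+1)‖ + P.ℓ₃ * ‖P.z (k+1) - P.z k‖ := by
    rw [hCd]
    have t1 := P.hlip_h (P.z (k+2)) (P.z (k+1))
    have t2 := P.hlip_φ₃ (P.z (k+2)) (P.z (k+1))
    have t3 := P.hlip_φ₃ (P.z (k+1)) (P.z k)
    calc ‖-(P.h' (P.z (k+2)) - P.h' (P.z (k+1)))
        + -(P.φ₃' (P.z (k+2)) - P.φ₃' (P.z (k+1)))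
        + (P.φ₃' (P.z (k+1)) - P.φ₃' (P.z k))‖
        ≤ ‖-(P.h' (P.z (k+2)) - P.h' (P.z (k+1)))‖
          + ‖-(P.φ₃' (P.z (k+2)) - P.φ₃' (P.z (k+1)))‖
          + ‖P.φ₃' (P.z (k+1)) - P.φ₃' (P.z k)‖ := norm_add₃_le
      _ ≤ (P.ℓh + P.ℓ₃) * ‖P.z (k+2) - P.z (k+1)‖ + P.ℓ₃ * ‖P.z (k+1) - P.z k‖ := by
          rw [norm_neg, norm_neg]; linarith [t1, t2, t3]
  have hrank := P.hC_rank (P.α • resid P (k+2))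
  have hsq : ‖(ContinuousLinearMap.adjoint P.C) (P.α • resid P (k+2))‖ ^ 2
      ≤ ((P.ℓh + P.ℓ₃) * ‖P.z (k+2) - P.z (k+1)‖ + P.ℓ₃ * ‖P.z (k+1) - P.z k‖) ^ 2 :=
    pow_le_pow_left₀ (norm_nonneg _) hnorm 2
  have hsm : ‖P.α • resid P (k+2)‖ ^ 2 = P.α ^ 2 * ‖resid P (k+2)‖ ^ 2 := by
    rw [norm_smul, Real.norm_eq_abs, mul_pow, sq_abs]
  rw [hsm] at hrank
  nlinarith [hrank, hsq,
    sq_nonneg ((P.ℓh + P.ℓ₃) * ‖P.z (k+2) - P.z (k+1)‖ - P.ℓ₃ * ‖P.z (k+1) - P.z k‖)]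

lemma S_descent (k : ℕ) :
    Sseq P (k+1) + delta P * ‖P.z (k+2) - P.z (k+1)‖ ^ 2 ≤ Sseq P k := by
  have hc : 0 < P.α * P.σC := mul_pos P.hα_pos P.hσC_pos
  have hci : 0 < (P.α * P.σC)⁻¹ := inv_pos.mpr hc
  have h1 := descent_primal P (k+1)
  have h2 := lag_p_step P (k+1)
  have h3 := dp_bound P k
  have hca : (P.α * P.σC)⁻¹ * (P.σC * P.α ^ 2) = P.α := by
    field_simp [P.hσC_pos.ne', P.hα_pos.ne']
  have h4 : P.α * ‖resid P (k+2)‖ ^ 2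
      ≤ (P.α * P.σC)⁻¹ * (2 * (P.ℓh + P.ℓ₃) ^ 2 * ‖P.z (k+2) - P.z (k+1)‖ ^ 2
          + 2 * P.ℓ₃ ^ 2 * ‖P.z (k+1) - P.z k‖ ^ 2) := by
    have h5 := mul_le_mul_of_nonneg_left h3 hci.le
    calc P.α * ‖resid P (k+2)‖ ^ 2
        = ((P.α * P.σC)⁻¹ * (P.σC * P.α ^ 2)) * ‖resid P (k+2)‖ ^ 2 := by rw [hca]
      _ = (P.α * P.σC)⁻¹ * (P.σC * (P.α ^ 2 * ‖resid P (k+2)‖ ^ 2)) := by ring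
      _ ≤ _ := h5
  simp only [Sseq, sigma0_eq, delta]
  nlinarith [h1, h2, h4]

end BADMMLemmas

/-- any cluster point of the sequence `w^k = (x^k,y^k,z^k,p^k)` satisfies
the feasibility condition and the dual optimality condition in `z`. -/
theorem badmm_cluster_point {n₁ n₂ n₃ m : ℕ} (P : BADMM n₁ n₂ n₃ m)
    (hbdd : ∃ M : ℝ, ∀ k : ℕ, ‖P.x k‖ ≤ M ∧ ‖P.y k‖ ≤ M ∧ ‖P.z k‖ ≤ M)
    (xs : Eu n₁) (ys : Eu n₂) (zs : Eu n₃) (ps : Eu m)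
    (κ : ℕ → ℕ) (hκ : StrictMono κ)
    (hlim : Tendsto (fun j : ℕ => (P.x (κ j), P.y (κ j), P.z (κ j), P.p (κ j)))
      atTop (nhds (xs, ys, zs, ps))) :
    P.A xs + P.B ys + P.C zs = 0 ∧
      (ContinuousLinearMap.adjoint P.C) ps = -P.h' zs := by
  classical
  -- component limits
  have hxlim : Tendsto (fun j => P.x (κ j)) atTop (nhds xs) :=
    (continuous_fst.tendsto _).comp hlim
  have hylim : Tendsto (fun j => P.y (κ j)) atTop (nhds ys) :=
    ((continuous_fst.comp continuous_snd).tendsto _).comp hlim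
  have hzlim : Tendsto (fun j => P.z (κ j)) atTop (nhds zs) :=
    ((continuous_fst.comp (continuous_snd.comp continuous_snd)).tendsto _).comp hlim
  have hplim : Tendsto (fun j => P.p (κ j)) atTop (nhds ps) :=
    ((continuous_snd.comp (continuous_snd.comp continuous_snd)).tendsto _).comp hlim
  -- continuity facts
  have hh'c : Continuous P.h' :=
    (LipschitzWith.of_dist_le' (K := P.ℓh) (fun a b => by
      rw [dist_eq_norm, dist_eq_norm]; exact P.hlip_h a b)).continuous
  have hφ₃'c : Continuous P.φ₃' :=
    (LipschitzWith.of_dist_le' (K := P.ℓ₃) (fun a b => by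
      rw [dist_eq_norm, dist_eq_norm]; exact P.hlip_φ₃ a b)).continuous
  have hhc : Continuous P.h := continuous_iff_continuousAt.mpr fun v =>
    (P.hgrad_h v).hasFDerivAt.differentiableAt.continuousAt
  -- limit of the residual along the subsequence
  have hres : Tendsto (fun j => P.A (P.x (κ j)) + P.B (P.y (κ j)) + P.C (P.z (κ j))) atTop
      (nhds (P.A xs + P.B ys + P.C zs)) :=
    (((P.A.continuous.tendsto xs).comp hxlim).add
      ((P.B.continuous.tendsto ys).comp hylim)).add ((P.C.continuous.tendsto zs).comp hzlim)
  -- the Lyapunov sequence is antitone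
  have hdelta := delta_pos P
  have hSanti : Antitone (Sseq P) := antitone_nat_of_succ_le (fun k => by
    have h1 := S_descent P k
    nlinarith [mul_nonneg hdelta.le (sq_nonneg (‖P.z (k+2) - P.z (k+1)‖))])
  -- the Lyapunov sequence is bounded below
  have hbrack : Tendsto (fun j => P.h (P.z (κ j))
      + ⟪P.p (κ j), P.A (P.x (κ j)) + P.B (P.y (κ j)) + P.C (P.z (κ j))⟫
      + P.α / 2 * ‖P.A (P.x (κ j)) + P.B (P.y (κ j)) + P.C (P.z (κ j))‖ ^ 2) atTop
      (nhds (P.h zs + ⟪ps, P.A xs + P.B ys + P.C zs⟫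
        + P.α / 2 * ‖P.A xs + P.B ys + P.C zs‖ ^ 2)) :=
    (((hhc.tendsto zs).comp hzlim).add (hplim.inner hres)).add
      (((hres.norm.pow 2)).const_mul (P.α / 2))
  set climit := P.h zs + ⟪ps, P.A xs + P.B ys + P.C zs⟫
      + P.α / 2 * ‖P.A xs + P.B ys + P.C zs‖ ^ 2 with hclimit
  have hfev : ∀ᶠ j in atTop, P.f xs - 1 < P.f (P.x (κ j)) :=
    hxlim.eventually (P.hf_lsc xs (P.f xs - 1) (by linarith))
  have hgev : ∀ᶠ j in atTop, P.g ys - 1 < P.g (P.y (κ j)) :=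
    hylim.eventually (P.hg_lsc ys (P.g ys - 1) (by linarith))
  have hbev : ∀ᶠ j in atTop, climit - 1 < P.h (P.z (κ j))
      + ⟪P.p (κ j), P.A (P.x (κ j)) + P.B (P.y (κ j)) + P.C (P.z (κ j))⟫
      + P.α / 2 * ‖P.A (P.x (κ j)) + P.B (P.y (κ j)) + P.C (P.z (κ j))‖ ^ 2 :=
    hbrack.eventually (eventually_gt_nhds (by linarith))
  obtain ⟨J, hJ⟩ := eventually_atTop.1 ((hfev.and hgev).and hbev)
  have hSlb : ∀ k, (P.f xs - 1) + (P.g ys - 1) + (climit - 1) ≤ Sseq P k := by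
    intro k
    set j := max J (k+1) with hj
    obtain ⟨⟨hf1, hg1⟩, hb1⟩ := hJ j (le_max_left _ _)
    have hjk : k + 1 ≤ κ j := le_trans (le_max_right _ _) hκ.le_apply
    have hsucc : κ j - 1 + 1 = κ j := by omega
    have hS1 : (P.f xs - 1) + (P.g ys - 1) + (climit - 1) ≤ Sseq P (κ j - 1) := by
      have hσ := mul_nonneg (sigma0_nonneg P) (sq_nonneg (‖P.z (κ j - 1 + 1) - P.z (κ j - 1)‖))
      simp only [Sseq, Lag, hsucc]
      rw [hsucc] at hσ
      linarith [hf1, hg1, hb1, hσ]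
    exact le_trans hS1 (hSanti (by omega : k ≤ κ j - 1))
  have hSbdd : BddBelow (Set.range (Sseq P)) :=
    ⟨(P.f xs - 1) + (P.g ys - 1) + (climit - 1), by rintro _ ⟨k, rfl⟩; exact hSlb k⟩
  -- convergence of S and vanishing of successive differences
  have hSconv : Tendsto (Sseq P) atTop (nhds (⨅ k, Sseq P k)) :=
    tendsto_atTop_ciInf hSanti hSbdd
  have hSdiff : Tendsto (fun k => Sseq P k - Sseq P (k+1)) atTop (nhds 0) := by
    have h2 : Tendsto (fun k => Sseq P (k+1)) atTop (nhds (⨅ k, Sseq P k)) :=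
      hSconv.comp (tendsto_add_atTop_nat 1)
    simpa using hSconv.sub h2
  have hz2 : Tendsto (fun k => ‖P.z (k+2) - P.z (k+1)‖ ^ 2) atTop (nhds 0) := by
    have hb : ∀ k, ‖P.z (k+2) - P.z (k+1)‖ ^ 2
        ≤ (delta P)⁻¹ * (Sseq P k - Sseq P (k+1)) := by
      intro k
      have h1 := S_descent P k
      have h2 : delta P * ‖P.z (k+2) - P.z (k+1)‖ ^ 2 ≤ Sseq P k - Sseq P (k+1) := by linarith
      calc ‖P.z (k+2) - P.z (k+1)‖ ^ 2
          = (delta P)⁻¹ * (delta P * ‖P.z (k+2) - P.z (k+1)‖ ^ 2) := by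
            field_simp
        _ ≤ (delta P)⁻¹ * (Sseq P k - Sseq P (k+1)) :=
            mul_le_mul_of_nonneg_left h2 (inv_pos.mpr hdelta).le
    have hlim0 : Tendsto (fun k => (delta P)⁻¹ * (Sseq P k - Sseq P (k+1))) atTop (nhds 0) := by
      simpa using hSdiff.const_mul (delta P)⁻¹
    exact squeeze_zero (fun k => sq_nonneg _) hb hlim0
  have hz2' : Tendsto (fun k => ‖P.z (k+1) - P.z k‖ ^ 2) atTop (nhds 0) :=
    (tendsto_add_atTop_iff_nat 1).mp hz2
  have hzd : Tendsto (fun k => ‖P.z (k+1) - P.z k‖) atTop (nhds 0) := by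
    have h0 := (Real.continuous_sqrt.tendsto 0).comp hz2'
    rw [Real.sqrt_zero] at h0
    exact h0.congr fun k => Real.sqrt_sq (norm_nonneg _)
  -- residual tends to zero
  have hr2 : Tendsto (fun k => ‖(P.A (P.x k) + P.B (P.y k) + P.C (P.z k) : Eu m)‖ ^ 2)
      atTop (nhds 0) := by
    have hpos : (0:ℝ) < P.σC * P.α ^ 2 := mul_pos P.hσC_pos (pow_pos P.hα_pos 2)
    have hb : ∀ k, ‖resid P (k+2)‖ ^ 2 ≤ (P.σC * P.α ^ 2)⁻¹
        * (2 * (P.ℓh + P.ℓ₃) ^ 2 * ‖P.z (k+2) - P.z (k+1)‖ ^ 2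
          + 2 * P.ℓ₃ ^ 2 * ‖P.z (k+1) - P.z k‖ ^ 2) := by
      intro k
      have h1 := dp_bound P k
      calc ‖resid P (k+2)‖ ^ 2
          = (P.σC * P.α ^ 2)⁻¹ * (P.σC * (P.α ^ 2 * ‖resid P (k+2)‖ ^ 2)) := by
            field_simp [P.hσC_pos.ne', P.hα_pos.ne']
        _ ≤ _ := mul_le_mul_of_nonneg_left h1 (inv_pos.mpr hpos).le
    have hlim0 : Tendsto (fun k => (P.σC * P.α ^ 2)⁻¹
        * (2 * (P.ℓh + P.ℓ₃) ^ 2 * ‖P.z (k+2) - P.z (k+1)‖ ^ 2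
          + 2 * P.ℓ₃ ^ 2 * ‖P.z (k+1) - P.z k‖ ^ 2)) atTop (nhds 0) := by
      have := ((hz2.const_mul (2 * (P.ℓh + P.ℓ₃) ^ 2)).add
        (hz2'.const_mul (2 * P.ℓ₃ ^ 2))).const_mul (P.σC * P.α ^ 2)⁻¹
      simpa using this
    have hsq2 : Tendsto (fun k => ‖resid P (k+2)‖ ^ 2) atTop (nhds 0) :=
      squeeze_zero (fun k => sq_nonneg _) hb hlim0
    exact (tendsto_add_atTop_iff_nat 2).mp hsq2
  have hresid0 : Tendsto (fun k => (P.A (P.x k) + P.B (P.y k) + P.C (P.z k) : Eu m))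
      atTop (nhds 0) := by
    rw [tendsto_zero_iff_norm_tendsto_zero]
    have h0 := (Real.continuous_sqrt.tendsto 0).comp hr2
    rw [Real.sqrt_zero] at h0
    exact h0.congr fun k => Real.sqrt_sq (norm_nonneg _)
  have hfeas : P.A xs + P.B ys + P.C zs = 0 :=
    tendsto_nhds_unique hres (hresid0.comp hκ.tendsto_atTop)
  -- dual condition
  have hterm : Tendsto (fun j => P.φ₃' (P.z (κ j - 1)) - P.φ₃' (P.z (κ j))) atTop (nhds 0) := by
    have hm : Tendsto (fun j => κ j - 1) atTop atTop :=
      tendsto_atTop_mono (fun j => Nat.sub_le_sub_right hκ.le_apply 1) (tendsto_sub_atTop_nat 1)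
    have hcomp : Tendsto (fun j => ‖P.z (κ j - 1 + 1) - P.z (κ j - 1)‖) atTop (nhds 0) :=
      hzd.comp hm
    have hznorm : Tendsto (fun j => ‖P.z (κ j) - P.z (κ j - 1)‖) atTop (nhds 0) := by
      refine hcomp.congr' ?_
      filter_upwards [eventually_ge_atTop 1] with j hj
      have : κ j - 1 + 1 = κ j := by
        have := hκ.le_apply (x := j); omega
      rw [this]
    rw [tendsto_zero_iff_norm_tendsto_zero]
    refine squeeze_zero (fun j => norm_nonneg _) (fun j => ?_) (by simpa using hznorm.const_mul P.ℓ₃)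
    calc ‖P.φ₃' (P.z (κ j - 1)) - P.φ₃' (P.z (κ j))‖
        ≤ P.ℓ₃ * ‖P.z (κ j - 1) - P.z (κ j)‖ := P.hlip_φ₃ _ _
      _ = P.ℓ₃ * ‖P.z (κ j) - P.z (κ j - 1)‖ := by rw [norm_sub_rev]
  have hCplim : Tendsto (fun j => (ContinuousLinearMap.adjoint P.C) (P.p (κ j))) atTop
      (nhds ((ContinuousLinearMap.adjoint P.C) ps)) :=
    ((ContinuousLinearMap.adjoint P.C).continuous.tendsto ps).comp hplim
  have hrhs : Tendsto (fun j => P.φ₃' (P.z (κ j - 1)) - P.h' (P.z (κ j)) - P.φ₃' (P.z (κ j)))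
      atTop (nhds (-P.h' zs)) := by
    have h1 : Tendsto (fun j => P.h' (P.z (κ j))) atTop (nhds (P.h' zs)) :=
      (hh'c.tendsto zs).comp hzlim
    have h2 := hterm.sub h1
    rw [zero_sub] at h2
    exact h2.congr (fun j => by abel)
  have hCopt : (ContinuousLinearMap.adjoint P.C) ps = -P.h' zs := by
    refine tendsto_nhds_unique (hCplim.congr' ?_) hrhs
    filter_upwards [eventually_ge_atTop 1] with j hj
    have hpos : 1 ≤ κ j := le_trans hj hκ.le_apply
    have hsucc : κ j - 1 + 1 = κ j := by omega
    have := cadj_p P (κ j - 1)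
    rw [hsucc] at this
    exact this
  exact ⟨hfeas, hCopt⟩
end
end
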